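/- arXiv:1711.08232 — 3 statements merged into one kernel-verified Lean document; each statement's English description precedes it below -/
import Mathlib

section
/- Let n ≥ 1 be an integer, and let s ∈ (0,1) and p ≥ 1 satisfy n > s p. Let Σ ⊆ ℝ^{n+1} be a set with locally finite ℋⁿ-measure, let U be an open subset of Σ (in the subspace topology), and suppose ℋⁿ(Σ ∩ B_ρ(x₀)) ≥ c⋆ ρⁿ for all x₀ ∈ U and all ρ > 0, for some constant c⋆ > 0. Then there exists a constant C depending only on n, s, p, and c⋆, such that ‖v‖_{L^{np/(n−sp)}(Σ, ℋⁿ)} ≤ C [v]_{W^{s,p}(Σ)} for every v ∈ L^p(Σ, ℋⁿ) with [v]_{W^{s,p}(Σ)} < ∞ that vanishes ℋⁿ-a.e. on Σ∖U. -/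
open MeasureTheory Metric Set
open scoped ENNReal NNReal

noncomputable section

namespace FracSobAux

/-- `pw t = 2^t` as an extended nonneg real. -/
def pw (t : ℝ) : ℝ≥0∞ := ENNReal.ofReal ((2:ℝ) ^ t)

lemma two_rpow_pos (t : ℝ) : (0:ℝ) < (2:ℝ) ^ t := Real.rpow_pos_of_pos two_pos t

lemma pw_ne_zero (t : ℝ) : pw t ≠ 0 := by
  simp [pw, ENNReal.ofReal_eq_zero, not_le, two_rpow_pos]

lemma pw_ne_top (t : ℝ) : pw t ≠ ⊤ := ENNReal.ofReal_ne_top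

lemma pw_add (a b : ℝ) : pw (a + b) = pw a * pw b := by
  rw [pw, Real.rpow_add two_pos, ENNReal.ofReal_mul (two_rpow_pos a).le]; rfl

lemma pw_zero : pw 0 = 1 := by simp [pw]

lemma pw_rpow (a b : ℝ) : pw a ^ b = pw (a * b) := by
  rw [pw, ENNReal.ofReal_rpow_of_pos (two_rpow_pos a), ← Real.rpow_mul (by norm_num), pw]

lemma pw_mono {a b : ℝ} (h : a ≤ b) : pw a ≤ pw b :=
  ENNReal.ofReal_le_ofReal (Real.rpow_le_rpow_of_exponent_le one_le_two h)

lemma tsum_pw_ne_top {c : ℝ} (hc : 0 < c) : (∑' k : ℕ, pw (-(k:ℝ) * c)) ≠ ⊤ := by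
  have h1 : ∀ k : ℕ, pw (-(k:ℝ) * c) = pw (-c) ^ k := by
    intro k
    induction k with
    | zero => simp [pw_zero]
    | succ m ih =>
      rw [pow_succ, ← ih, ← pw_add]
      congr 1
      push_cast; ring
  simp_rw [h1]
  rw [ENNReal.tsum_geometric]
  have hlt : pw (-c) < 1 := by
    rw [pw, ENNReal.ofReal_lt_one]
    exact Real.rpow_lt_one_of_one_lt_of_neg one_lt_two (neg_neg_iff_pos.2 hc)
  rw [Ne, ENNReal.inv_eq_top, tsub_eq_zero_iff_le]
  exact hlt.not_ge

lemma one_le_tsum_pw (c : ℝ) : 1 ≤ ∑' k : ℕ, pw (-(k:ℝ) * c) := by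
  have := ENNReal.le_tsum (f := fun k : ℕ => pw (-(k:ℝ) * c)) 0
  simpa [pw_zero] using this

/-- Every positive real lies in a dyadic interval `(2^j, 2^(j+1)]`. -/
lemma exists_dyadic {t : ℝ} (ht : 0 < t) :
    ∃ j : ℤ, (2:ℝ) ^ (j:ℝ) < t ∧ t ≤ (2:ℝ) ^ ((j:ℝ) + 1) := by
  refine ⟨⌈Real.logb 2 t⌉ - 1, ?_, ?_⟩
  · have h1 : ((⌈Real.logb 2 t⌉ - 1 : ℤ) : ℝ) < Real.logb 2 t := by
      push_cast
      linarith [Int.ceil_lt_add_one (Real.logb 2 t), Int.le_ceil (Real.logb 2 t)]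
    calc (2:ℝ) ^ ((⌈Real.logb 2 t⌉ - 1 : ℤ) : ℝ) < 2 ^ Real.logb 2 t :=
          (Real.rpow_lt_rpow_left_iff one_lt_two).2 h1
    _ = t := Real.rpow_logb two_pos (by norm_num) ht
  · have h2 : Real.logb 2 t ≤ ((⌈Real.logb 2 t⌉ - 1 : ℤ) : ℝ) + 1 := by
      push_cast
      linarith [Int.le_ceil (Real.logb 2 t)]
    calc t = 2 ^ Real.logb 2 t := (Real.rpow_logb two_pos (by norm_num) ht).symm
    _ ≤ (2:ℝ) ^ (((⌈Real.logb 2 t⌉ - 1 : ℤ) : ℝ) + 1) :=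
          (Real.rpow_le_rpow_left_iff one_lt_two).2 h2

lemma abs_min_sub_min (a b c : ℝ) : |min a c - min b c| ≤ |a - b| := by
  rcases le_total a c with h1 | h1 <;> rcases le_total b c with h2 | h2 <;>
    rw [abs_le] <;> constructor <;>
    simp [min_eq_left, min_eq_right, h1, h2, abs_le] <;> cases abs_cases (a - b) <;> linarith

/-- Core geometric estimate. -/
lemma geom_lb {E : Type*} [NormedAddCommGroup E] [MeasurableSpace E] [OpensMeasurableSpace E]
    [MeasurableSingletonClass E]
    (n : ℕ) (hn : 0 < n) {β : ℝ} (hβ : 0 < β)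
    (μ : Measure E) {c1 : ℝ} (hc1 : 0 < c1) (x : E)
    (hx : ∀ ρ : ℝ, 0 < ρ → ENNReal.ofReal (c1 * ρ ^ n) ≤ μ (ball x ρ))
    (hxs : μ {x} = 0) {B : Set E} (hB : MeasurableSet B) (hB0 : μ B ≠ 0) (hBt : μ B ≠ ⊤) :
    ENNReal.ofReal ((2 / c1) ^ (-β / (n:ℝ))) * μ B ^ ((1:ℝ) - β / (n:ℝ)) ≤
      ∫⁻ y in Bᶜ, ENNReal.ofReal (‖x - y‖ ^ (-β)) ∂μ := by
  have hn' : (0:ℝ) < n := by exact_mod_cast hn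
  set t := (μ B).toReal with htdef
  have ht : 0 < t := ENNReal.toReal_pos hB0 hBt
  have hμBt : ENNReal.ofReal t = μ B := ENNReal.ofReal_toReal hBt
  set r := (2 * t / c1) ^ ((n:ℝ))⁻¹ with hrdef
  have hbase : 0 < 2 * t / c1 := by positivity
  have hr : 0 < r := Real.rpow_pos_of_pos hbase _
  have hrn : c1 * r ^ n = 2 * t := by
    have h : r ^ (n:ℕ) = 2 * t / c1 := by
      rw [hrdef, ← Real.rpow_natCast ((2*t/c1) ^ ((n:ℝ))⁻¹) n, ← Real.rpow_mul hbase.le,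
        inv_mul_cancel₀ (by exact_mod_cast hn.ne' : (n:ℝ) ≠ 0), Real.rpow_one]
    rw [h]; field_simp
  have h2 : μ B + μ B ≤ μ (ball x r) := by
    have hh := hx r hr
    rw [hrn] at hh
    calc μ B + μ B = ENNReal.ofReal (2 * t) := by
          rw [two_mul, ENNReal.ofReal_add ht.le ht.le, hμBt]
    _ ≤ μ (ball x r) := hh
  have h3 : μ B ≤ μ (Bᶜ ∩ ball x r) := by
    have hsub : ball x r ⊆ (Bᶜ ∩ ball x r) ∪ B := fun y hy => by
      by_cases h : y ∈ B
      · exact Or.inr h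
      · exact Or.inl ⟨h, hy⟩
    have h5 : μ B + μ B ≤ μ (Bᶜ ∩ ball x r) + μ B :=
      h2.trans ((measure_mono hsub).trans (measure_union_le _ _))
    exact (ENNReal.add_le_add_iff_right hBt).1 h5
  set G := (Bᶜ ∩ ball x r) \ {x} with hGdef
  have hGmeas : MeasurableSet G :=
    (hB.compl.inter measurableSet_ball).diff (measurableSet_singleton x)
  have hG : μ B ≤ μ G := by
    rw [hGdef, measure_diff_null hxs]; exact h3
  have key : ENNReal.ofReal (r ^ (-β)) * μ B ≤
      ∫⁻ y in Bᶜ, ENNReal.ofReal (‖x - y‖ ^ (-β)) ∂μ := by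
    calc ENNReal.ofReal (r ^ (-β)) * μ B ≤ ENNReal.ofReal (r ^ (-β)) * μ G :=
          mul_le_mul_right hG _
    _ = ∫⁻ _ in G, ENNReal.ofReal (r ^ (-β)) ∂μ := (setLIntegral_const _ _).symm
    _ ≤ ∫⁻ y in G, ENNReal.ofReal (‖x - y‖ ^ (-β)) ∂μ := by
        refine lintegral_mono_ae ?_
        filter_upwards [ae_restrict_mem hGmeas] with y hy
        obtain ⟨⟨hyB, hyball⟩, hyx⟩ := hy
        have h1 : ‖x - y‖ < r := by
          rw [mem_ball, dist_eq_norm, ← norm_neg] at hyball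
          simpa [neg_sub] using hyball
        have h0 : 0 < ‖x - y‖ := by
          rw [norm_pos_iff, sub_ne_zero]
          exact fun h => hyx (by simp [h.symm])
        exact ENNReal.ofReal_le_ofReal
          (Real.rpow_le_rpow_of_nonpos h0 h1.le (neg_nonpos.2 hβ.le))
    _ ≤ ∫⁻ y in Bᶜ, ENNReal.ofReal (‖x - y‖ ^ (-β)) ∂μ :=
          lintegral_mono' (Measure.restrict_mono (fun y hy => hy.1.1) le_rfl) le_rfl
  have hrβ : r ^ (-β) = (2/c1) ^ (-β/(n:ℝ)) * t ^ (-β/(n:ℝ)) := by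
    rw [hrdef, ← Real.rpow_mul hbase.le,
      show ((n:ℝ))⁻¹ * (-β) = -β / (n:ℝ) by ring,
      show 2 * t / c1 = (2/c1) * t by ring,
      Real.mul_rpow (by positivity) ht.le]
  calc ENNReal.ofReal ((2 / c1) ^ (-β / (n:ℝ))) * μ B ^ ((1:ℝ) - β / (n:ℝ))
      = ENNReal.ofReal (r ^ (-β)) * μ B := by
        rw [hrβ, ENNReal.ofReal_mul (by positivity)]
        rw [mul_assoc]
        congr 1
        rw [← hμBt, ← ENNReal.ofReal_rpow_of_pos ht,
          show (1:ℝ) - β/(n:ℝ) = -β/(n:ℝ) + 1 by ring,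
          ENNReal.rpow_add _ _ (by simp [ENNReal.ofReal_eq_zero, not_le, ht]) ENNReal.ofReal_ne_top,
          ENNReal.rpow_one]
    _ ≤ _ := key

end FracSobAux

open FracSobAux

/-- The fractional Sobolev seminorm
`[v]_{W^{s,p}(U)} = (∫_U ∫_U |v(x)-v(y)|^p |x-y|^{-(n+sp)} dℋⁿ(x) dℋⁿ(y))^{1/p}`
on an `ℋⁿ`-measurable subset `U` of `ℝ^{n+1}`. -/
def fracSeminorm (n : ℕ) (s p : ℝ) (U : Set (EuclideanSpace ℝ (Fin (n + 1))))
    (v : EuclideanSpace ℝ (Fin (n + 1)) → ℝ) : ℝ≥0∞ :=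
  (∫⁻ x in U, ∫⁻ y in U,
      ENNReal.ofReal (|v x - v y| ^ p * ‖x - y‖ ^ (-((n : ℝ) + s * p)))
        ∂μH[(n : ℝ)] ∂μH[(n : ℝ)]) ^ (1 / p)

/-- Universal fractional Sobolev inequality on sets satisfying a global density lower
bound (Proposition 5.2 / Theorem 1.4). -/
theorem fractional_sobolev_global (n : ℕ) (hn : 1 ≤ n) (s p : ℝ)
    (hs : s ∈ Ioo (0 : ℝ) 1) (hp : 1 ≤ p) (hnsp : s * p < n)
    (cstar : ℝ) (hcstar : 0 < cstar) :
    ∃ C : ℝ, 0 < C ∧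
      ∀ (S U : Set (EuclideanSpace ℝ (Fin (n + 1)))),
        (∀ x : EuclideanSpace ℝ (Fin (n + 1)), ∃ ε > 0, μH[(n : ℝ)] (S ∩ ball x ε) ≠ ⊤) →
        (∃ V : Set (EuclideanSpace ℝ (Fin (n + 1))), IsOpen V ∧ U = S ∩ V) →
        (∀ x₀ ∈ U, ∀ ρ : ℝ, 0 < ρ →
          ENNReal.ofReal (cstar * ρ ^ n) ≤ μH[(n : ℝ)] (S ∩ ball x₀ ρ)) →
        ∀ v : EuclideanSpace ℝ (Fin (n + 1)) → ℝ,
          MemLp v (ENNReal.ofReal p) (μH[(n : ℝ)].restrict S) →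
          fracSeminorm n s p S v ≠ ⊤ →
          (∀ᵐ x ∂(μH[(n : ℝ)].restrict (S \ U)), v x = 0) →
          eLpNorm v (ENNReal.ofReal ((n : ℝ) * p / ((n : ℝ) - s * p)))
              (μH[(n : ℝ)].restrict S)
            ≤ ENNReal.ofReal C * fracSeminorm n s p S v := by
  classical
  obtain ⟨hs0, hs1⟩ := hs
  have hp0 : (0:ℝ) < p := lt_of_lt_of_le one_pos hp
  have hnn : 0 < n := hn
  have hn' : (0:ℝ) < n := by exact_mod_cast hnn
  have hsp : 0 < s * p := mul_pos hs0 hp0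
  have hnsp' : 0 < (n:ℝ) - s*p := sub_pos.2 hnsp
  set θ : ℝ := s * p / n with hθdef
  have hθ0 : 0 < θ := by positivity
  have hθ1 : θ < 1 := (div_lt_one hn').2 hnsp
  set q : ℝ := (n:ℝ) * p / ((n:ℝ) - s * p) with hqdef
  have hq0 : 0 < q := by positivity
  have hqθ : (1 - θ) * q = p := by
    rw [hθdef, hqdef]
    field_simp
  have hpq : p < q := by nlinarith
  have hβ0 : 0 < (n:ℝ) + s*p := by positivity
  set c1 : ℝ := cstar / 2^n with hc1def
  have hc1 : 0 < c1 := by positivity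
  set c0 : ℝ := (2 / c1) ^ (-((n:ℝ) + s*p) / (n:ℝ)) with hc0def
  have hc0 : 0 < c0 := Real.rpow_pos_of_pos (by positivity) _
  set Λ : ℝ≥0∞ := ∑' k : ℕ, pw (-(k:ℝ) * q) with hΛdef
  have hΛtop : Λ ≠ ⊤ := tsum_pw_ne_top hq0
  have hΛ1 : (1:ℝ≥0∞) ≤ Λ := one_le_tsum_pw q
  have hΛ0 : Λ ≠ 0 := fun h => by simp [h] at hΛ1
  set κ : ℝ := c0⁻¹ * 2 ^ q * Λ.toReal with hκdef
  have hΛtR : 0 < Λ.toReal := ENNReal.toReal_pos hΛ0 hΛtop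
  have hκ : 0 < κ := by
    have h2q : (0:ℝ) < 2 ^ q := two_rpow_pos q
    positivity
  set K : ℝ≥0∞ := ENNReal.ofReal κ with hKdef
  have hK : K = (ENNReal.ofReal c0)⁻¹ * pw q * Λ := by
    rw [hKdef, hκdef, ENNReal.ofReal_mul (by positivity), ENNReal.ofReal_mul (by positivity),
      ENNReal.ofReal_inv_of_pos hc0, ENNReal.ofReal_toReal hΛtop]
    rfl
  refine ⟨2 * κ ^ ((1:ℝ)/p), by positivity, ?_⟩
  rintro S U hloc ⟨V, hVopen, hUV⟩ hden v hMem hsem hv0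
  set μ' := μH[(n:ℝ)].restrict S with hμ'def
  -- measurable representative
  have hvm := hMem.aestronglyMeasurable
  set g : EuclideanSpace ℝ (Fin (n+1)) → ℝ := hvm.mk v with hgdef
  have hgmeas : Measurable g := hvm.stronglyMeasurable_mk.measurable
  have hgv : v =ᵐ[μ'] g := hvm.ae_eq_mk
  obtain ⟨N, hNsub, hNmeas, hN0⟩ :=
    exists_measurable_superset_of_null (μ := μ') (s := {x | v x ≠ g x}) (ae_iff.1 hgv)
  obtain ⟨W, hWsub, hWmeas, hW0⟩ :=
    exists_measurable_superset_of_null (μ := μH[(n:ℝ)].restrict (S \ U))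
      (s := {x | v x ≠ 0}) (ae_iff.1 hv0)
  have hW0' : μH[(n:ℝ)] (W ∩ (S \ U)) = 0 := by
    rwa [Measure.restrict_apply hWmeas] at hW0
  -- sets of nonvanishing of g inside V, up to null sets
  have hVnull : ∀ E' : Set (EuclideanSpace ℝ (Fin (n+1))), MeasurableSet E' →
      E' ⊆ {x | g x ≠ 0} → μ' (E' \ V) = 0 := by
    intro E' hE'meas hE'sub
    have hsplit : E' \ V ⊆ N ∪ (W ∩ (E' \ V)) := by
      intro x hx
      by_cases hxN : x ∈ N
      · exact Or.inl hxN
      · refine Or.inr ⟨?_, hx⟩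
        have hvg : v x = g x := by
          by_contra h
          exact hxN (hNsub h)
        exact hWsub (show v x ≠ 0 by rw [hvg]; exact hE'sub hx.1)
    have h1 : μ' (W ∩ (E' \ V)) = 0 := by
      have hm : MeasurableSet (W ∩ (E' \ V)) :=
        hWmeas.inter (hE'meas.diff hVopen.measurableSet)
      rw [hμ'def, Measure.restrict_apply hm]
      refine measure_mono_null ?_ hW0'
      rintro x ⟨⟨hxW, hxE, hxV⟩, hxS⟩
      exact ⟨hxW, hxS, fun hxU => hxV (hUV ▸ hxU).2⟩
    refine le_antisymm ?_ (zero_le')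
    calc μ' (E' \ V) ≤ μ' (N ∪ (W ∩ (E' \ V))) := measure_mono hsplit
    _ ≤ μ' N + μ' (W ∩ (E' \ V)) := measure_union_le _ _
    _ = 0 := by rw [hN0, h1, add_zero]
  -- measurable subsets of V carry no mass outside `closure U`
  have hclos : ∀ E' : Set (EuclideanSpace ℝ (Fin (n+1))), MeasurableSet E' →
      E' ⊆ V → μ' (E' \ closure U) = 0 := by
    intro E' hm hsub
    rw [hμ'def, Measure.restrict_apply (hm.diff isClosed_closure.measurableSet)]
    have hempty : (E' \ closure U) ∩ S = ∅ := by
      ext x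
      simp only [mem_inter_iff, mem_diff, mem_empty_iff_false, iff_false, not_and]
      rintro ⟨hxE, hxcl⟩ hxS
      exact hxcl (subset_closure (show x ∈ U by rw [hUV]; exact ⟨hxS, hsub hxE⟩))
    rw [hempty, measure_empty]
  -- density bound at points of the closure of U
  have hden' : ∀ x ∈ closure U, ∀ ρ : ℝ, 0 < ρ →
      ENNReal.ofReal (c1 * ρ ^ n) ≤ μ' (ball x ρ) := by
    intro x hx ρ hρ
    obtain ⟨y, hyU, hy⟩ := Metric.mem_closure_iff.1 hx (ρ/2) (by linarith)
    have hsub : ball y (ρ/2) ⊆ ball x ρ := by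
      refine ball_subset_ball' ?_
      rw [dist_comm]
      linarith
    calc ENNReal.ofReal (c1 * ρ^n) = ENNReal.ofReal (cstar * (ρ/2)^n) := by
          congr 1
          rw [hc1def, div_pow]
          field_simp
    _ ≤ μH[(n:ℝ)] (S ∩ ball y (ρ/2)) := hden y hyU _ (by linarith)
    _ ≤ μ' (ball x ρ) := by
          rw [hμ'def, Measure.restrict_apply measurableSet_ball]
          exact measure_mono (fun z hz => ⟨hsub hz.2, hz.1⟩)
  -- singletons are null
  haveI : NoAtoms (μH[(n:ℝ)] : Measure (EuclideanSpace ℝ (Fin (n+1)))) :=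
    Measure.noAtoms_hausdorff _ (by exact_mod_cast hnn)
  have hsing : ∀ x : EuclideanSpace ℝ (Fin (n+1)), μ' {x} = 0 := by
    intro x
    rw [hμ'def, Measure.restrict_apply (measurableSet_singleton x)]
    exact measure_mono_null inter_subset_left (this.1 x)
  -- finiteness of the p-energy
  have hIp_top : (∫⁻ x, (ENNReal.ofReal |g x|) ^ p ∂μ') ≠ ⊤ := by
    have h1 := hMem.eLpNorm_lt_top
    rw [eLpNorm_eq_lintegral_rpow_enorm_toReal
        (by simp [ENNReal.ofReal_eq_zero, not_le, hp0]) ENNReal.ofReal_ne_top,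
      ENNReal.toReal_ofReal hp0.le] at h1
    have h2 : (∫⁻ x, ((‖v x‖₊ : ℝ≥0∞)) ^ p ∂μ') < ⊤ :=
      (ENNReal.rpow_lt_top_iff_of_pos (by positivity : (0:ℝ) < 1/p)).1 h1
    have h3 : (∫⁻ x, (ENNReal.ofReal |g x|) ^ p ∂μ') =
        ∫⁻ x, ((‖v x‖₊ : ℝ≥0∞)) ^ p ∂μ' := by
      refine lintegral_congr_ae ?_
      filter_upwards [hgv] with x hx
      show _ = ‖v x‖ₑ ^ p
      rw [Real.enorm_eq_ofReal_abs, hx]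
    rw [h3]
    exact h2.ne
  set Ip := ∫⁻ x, (ENNReal.ofReal |g x|) ^ p ∂μ' with hIpdef
  -- dyadic levels
  set lv : ℤ → ℝ := fun i => (2:ℝ) ^ (i:ℝ) with hlvdef
  have hlvpos : ∀ i, 0 < lv i := fun i => two_rpow_pos _
  have hlvmono : ∀ {i j : ℤ}, i ≤ j → lv i ≤ lv j := by
    intro i j h
    exact Real.rpow_le_rpow_of_exponent_le one_le_two (by exact_mod_cast h)
  have hlv2 : ∀ i : ℤ, lv i = 2 * lv (i-1) := by
    intro i
    rw [hlvdef]
    simp only []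
    rw [show ((i:ℝ)) = ((i-1:ℤ):ℝ) + 1 by push_cast; ring, Real.rpow_add two_pos]
    push_cast
    ring
  have hpwlv : ∀ i : ℤ, pw ((i:ℝ)) = ENNReal.ofReal (lv i) := fun i => rfl
  -- Chebyshev
  have hcheb : ∀ i : ℤ, pw ((i:ℝ) * p) * μ' {x | lv i < |g x|} ≤ Ip := by
    intro i
    have hmeas : AEMeasurable (fun x => (ENNReal.ofReal |g x|) ^ p) μ' :=
      ((ENNReal.measurable_ofReal.comp hgmeas.abs).pow_const _).aemeasurable
    have h1 := mul_meas_ge_le_lintegral₀ hmeas (pw ((i:ℝ) * p))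
    refine le_trans (mul_le_mul_right (measure_mono ?_) _) h1
    intro x hx
    show pw ((i:ℝ)*p) ≤ (ENNReal.ofReal |g x|) ^ p
    calc pw ((i:ℝ)*p) = (ENNReal.ofReal (lv i)) ^ p := by rw [← pw_rpow]; rfl
    _ ≤ (ENNReal.ofReal |g x|) ^ p :=
        ENNReal.rpow_le_rpow (ENNReal.ofReal_le_ofReal (le_of_lt hx)) hp0.le
  -- dyadic pieces of g
  set Dg : ℤ → Set (EuclideanSpace ℝ (Fin (n+1))) :=
    fun i => {x | lv i < |g x| ∧ |g x| ≤ lv (i+1)} with hDgdef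
  have hDgmeas : ∀ i, MeasurableSet (Dg i) := fun i =>
    (measurableSet_lt measurable_const hgmeas.abs).inter
      (measurableSet_le hgmeas.abs measurable_const)
  have hDgdisj : Pairwise (Function.onFun Disjoint Dg) := by
    intro i j hij
    rcases hij.lt_or_gt with h | h
    · rw [Function.onFun]
      refine disjoint_left.2 fun x hxi hxj => ?_
      exact absurd (lt_of_le_of_lt (le_trans hxi.2 (hlvmono (by omega))) hxj.1) (lt_irrefl _)
    · rw [Function.onFun]
      refine disjoint_left.2 fun x hxi hxj => ?_
      exact absurd (lt_of_le_of_lt (le_trans hxj.2 (hlvmono (by omega))) hxi.1) (lt_irrefl _)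
  have hgU : {x | g x ≠ 0} = ⋃ i : ℤ, Dg i := by
    ext x
    simp only [mem_setOf_eq, mem_iUnion]
    constructor
    · intro hx
      obtain ⟨j, hj1, hj2⟩ := exists_dyadic (abs_pos.2 hx)
      refine ⟨j, hj1, ?_⟩
      rw [hlvdef]
      show |g x| ≤ (2:ℝ) ^ ((j+1 : ℤ):ℝ)
      push_cast
      exact hj2
    · rintro ⟨i, hi⟩
      exact fun h => absurd (by rw [h]; simpa using hlvpos i) (not_lt.2 hi.1.le)
  -- the double integral with g
  set Fg : EuclideanSpace ℝ (Fin (n+1)) → EuclideanSpace ℝ (Fin (n+1)) → ℝ≥0∞ :=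
    fun x y => ENNReal.ofReal (|g x - g y| ^ p * ‖x - y‖ ^ (-((n:ℝ) + s * p))) with hFgdef
  set Tg : ℝ≥0∞ := ∫⁻ x, (∫⁻ y, Fg x y ∂μ') ∂μ' with hTgdef
  have hTveq : fracSeminorm n s p S v = Tg ^ ((1:ℝ)/p) := by
    rw [fracSeminorm, hTgdef]
    congr 1
    refine lintegral_congr_ae ?_
    filter_upwards [hgv] with x hx
    refine lintegral_congr_ae ?_
    filter_upwards [hgv] with y hy
    rw [hFgdef]
    simp only []
    rw [hx, hy]
  -- the key estimate for each truncation level M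
  have key : ∀ M : ℤ, (∑' i : ℤ, pw ((i:ℝ) * q) *
      μ' {x | lv i < min |g x| (lv M) ∧ min |g x| (lv M) ≤ lv (i+1)}) ≤
      (K * Tg) ^ ((1:ℝ)/(1-θ)) := by
    intro M
    set w : EuclideanSpace ℝ (Fin (n+1)) → ℝ := fun x => min |g x| (lv M) with hwdef
    have hwmeas : Measurable w := hgmeas.abs.min measurable_const
    have hwle : ∀ x, w x ≤ |g x| := fun x => min_le_left _ _
    have hwleM : ∀ x, w x ≤ lv M := fun x => min_le_right _ _
    set B : ℤ → Set (EuclideanSpace ℝ (Fin (n+1))) := fun i => {x | lv i < w x} with hBdef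
    set D : ℤ → Set (EuclideanSpace ℝ (Fin (n+1))) :=
      fun i => {x | lv i < w x ∧ w x ≤ lv (i+1)} with hDdef
    set a : ℤ → ℝ≥0∞ := fun i => μ' (B i) with hadef
    set d : ℤ → ℝ≥0∞ := fun i => μ' (D i) with hddef
    have hBmeas : ∀ i, MeasurableSet (B i) := fun i => measurableSet_lt measurable_const hwmeas
    have hDmeas : ∀ i, MeasurableSet (D i) := fun i =>
      (measurableSet_lt measurable_const hwmeas).inter (measurableSet_le hwmeas measurable_const)
    have hDsubB : ∀ i, D i ⊆ B i := fun i x hx => hx.1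
    have hBanti : ∀ {i j : ℤ}, i ≤ j → B j ⊆ B i :=
      fun {i j} h x hx => lt_of_le_of_lt (hlvmono h) hx
    have ha_le : ∀ i : ℤ, pw ((i:ℝ)*p) * a i ≤ Ip := by
      intro i
      refine le_trans (mul_le_mul_right (measure_mono ?_) _) (hcheb i)
      exact fun x hx => lt_of_lt_of_le hx (hwle x)
    have ha_top : ∀ i, a i ≠ ⊤ := by
      intro i h
      apply hIp_top
      have h1 := ha_le i
      rw [h, ENNReal.mul_top (pw_ne_zero _)] at h1
      exact top_le_iff.1 h1
    have ha_bound : ∀ i : ℤ, a i ≤ pw (-(i:ℝ)*p) * Ip := by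
      intro i
      calc a i = pw (-(i:ℝ)*p) * (pw ((i:ℝ)*p) * a i) := by
            rw [← mul_assoc, ← pw_add, show -(i:ℝ)*p + (i:ℝ)*p = 0 by ring, pw_zero, one_mul]
      _ ≤ _ := mul_le_mul_right (ha_le i) _
    have ha_zero : ∀ i : ℤ, M ≤ i → a i = 0 := by
      intro i hMi
      have hBempty : B i = ∅ := by
        ext x
        simp only [hBdef, mem_setOf_eq, mem_empty_iff_false, iff_false, not_lt]
        exact le_trans (hwleM x) (hlvmono hMi)
      rw [hadef]
      simp only [hBempty, measure_empty]
    have hDdisj : Pairwise (Function.onFun Disjoint D) := by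
      intro i j hij
      rcases hij.lt_or_gt with h | h
      · rw [Function.onFun]
        refine disjoint_left.2 fun x hxi hxj => ?_
        exact absurd (lt_of_le_of_lt (le_trans hxi.2 (hlvmono (by omega))) hxj.1) (lt_irrefl _)
      · rw [Function.onFun]
        refine disjoint_left.2 fun x hxi hxj => ?_
        exact absurd (lt_of_le_of_lt (le_trans hxj.2 (hlvmono (by omega))) hxi.1) (lt_irrefl _)
    have hBU : ∀ i : ℤ, B i = ⋃ k : ℕ, D (i + k) := by
      intro i
      ext x
      simp only [hBdef, hDdef, mem_setOf_eq, mem_iUnion]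
      constructor
      · intro hx
        have hwpos : 0 < w x := lt_trans (hlvpos i) hx
        obtain ⟨j, hj1, hj2⟩ := exists_dyadic hwpos
        have hj2' : w x ≤ lv (j+1) := by
          rw [hlvdef]
          show w x ≤ (2:ℝ) ^ ((j+1 : ℤ):ℝ)
          push_cast
          exact hj2
        have hij : i ≤ j := by
          by_contra h
          push_neg at h
          exact absurd (lt_of_le_of_lt (le_trans hj2' (hlvmono (by omega))) hx) (lt_irrefl _)
        refine ⟨(j - i).toNat, ?_, ?_⟩
        · rw [show (i + ((j - i).toNat : ℤ)) = j by omega]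
          exact hj1
        · rw [show (i + ((j - i).toNat : ℤ)) = j by omega]
          exact hj2'
      · rintro ⟨k, hk1, _⟩
        exact lt_of_le_of_lt (hlvmono (by omega)) hk1
    have ha_sum : ∀ i : ℤ, a i = ∑' k : ℕ, d (i + k) := by
      intro i
      rw [hadef]
      simp only [hBU i]
      refine measure_iUnion ?_ (fun k => hDmeas _)
      intro k1 k2 hk
      exact hDdisj (by omega : i + (k1:ℤ) ≠ i + (k2:ℤ))
    set A := ∑' i : ℤ, pw ((i:ℝ)*q) * a i with hAdef
    -- A is finite
    have hA_top : A ≠ ⊤ := by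
      have hinj : Function.Injective (fun k : ℕ => M - 1 - (k:ℤ)) := by
        intro k1 k2 h
        dsimp at h
        omega
      have hsupp : Function.support (fun i : ℤ => pw ((i:ℝ)*q) * a i) ⊆
          Set.range (fun k : ℕ => M - 1 - (k:ℤ)) := by
        intro i hi
        rcases le_or_gt M i with h | h
        · exact absurd (by simp only [ha_zero i h, mul_zero]) hi
        · exact ⟨(M - 1 - i).toNat, by dsimp; omega⟩
      have heq : A = ∑' k : ℕ, pw (((M - 1 - (k:ℤ) : ℤ):ℝ)*q) * a (M - 1 - k) :=
        (hinj.tsum_eq hsupp).symm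
      rw [heq]
      have hterm : ∀ k : ℕ, pw (((M - 1 - (k:ℤ) : ℤ):ℝ)*q) * a (M - 1 - k) ≤
          pw (((M:ℝ) - 1)*(q - p)) * (pw (-(k:ℝ)*(q-p)) * Ip) := by
        intro k
        calc pw (((M - 1 - (k:ℤ) : ℤ):ℝ)*q) * a (M - 1 - k)
            ≤ pw (((M - 1 - (k:ℤ) : ℤ):ℝ)*q) * (pw (-((M - 1 - (k:ℤ) : ℤ):ℝ)*p) * Ip) :=
              mul_le_mul_right (ha_bound _) _
        _ = pw (((M:ℝ) - 1)*(q - p)) * (pw (-(k:ℝ)*(q-p)) * Ip) := by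
              rw [← mul_assoc, ← mul_assoc, ← pw_add, ← pw_add]
              congr 2
              push_cast
              ring
      refine ne_top_of_le_ne_top ?_ (ENNReal.tsum_le_tsum hterm)
      rw [ENNReal.tsum_mul_left, ENNReal.tsum_mul_right]
      exact ENNReal.mul_ne_top (pw_ne_top _)
        (ENNReal.mul_ne_top (tsum_pw_ne_top (by linarith)) hIp_top)
    set Sd := ∑' i : ℤ, pw ((i:ℝ)*q) * d i with hSddef
    have hSd_le_A : Sd ≤ A :=
      ENNReal.tsum_le_tsum fun i => mul_le_mul_right (measure_mono (hDsubB i)) _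
    -- A = Λ * Sd
    have hAΛ : A = Λ * Sd := by
      rw [hAdef]
      have h1 : ∀ i : ℤ, pw ((i:ℝ)*q) * a i = ∑' k : ℕ, pw ((i:ℝ)*q) * d (i + k) := by
        intro i
        rw [ha_sum i, ENNReal.tsum_mul_left]
      simp_rw [h1]
      rw [ENNReal.tsum_comm]
      have h2 : ∀ k : ℕ, (∑' i : ℤ, pw ((i:ℝ)*q) * d (i + k)) = pw (-(k:ℝ)*q) * Sd := by
        intro k
        have h3 : ∀ i : ℤ, pw ((i:ℝ)*q) * d (i + k) =
            (fun j : ℤ => pw (-(k:ℝ)*q) * (pw ((j:ℝ)*q) * d j)) ((Equiv.addRight (k:ℤ)) i) := by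
          intro i
          simp only [Equiv.coe_addRight]
          rw [← mul_assoc, ← pw_add]
          congr 2
          push_cast
          ring
        simp_rw [h3]
        rw [Equiv.tsum_eq (Equiv.addRight (k:ℤ)) (fun j : ℤ => pw (-(k:ℝ)*q) * (pw ((j:ℝ)*q) * d j))]
        rw [ENNReal.tsum_mul_left]
      simp_rw [h2]
      rw [ENNReal.tsum_mul_right]
    -- the core geometric estimate, term by term
    have hexp' : (1:ℝ) - ((n:ℝ) + s*p)/(n:ℝ) = -θ := by
      rw [hθdef]
      field_simp
      ring
    have hcore : ∀ i : ℤ, ENNReal.ofReal c0 * pw (((i:ℝ)-1)*p) * a (i-1) ^ (-θ) * d i ≤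
        ∫⁻ x in D i ∩ V, (∫⁻ y, Fg x y ∂μ') ∂μ' := by
      intro i
      rcases eq_or_ne (d i) 0 with hdi0 | hdi0
      · rw [hdi0, mul_zero]
        exact zero_le'
      have hDiBi1 : D i ⊆ B (i-1) := fun x hx => hBanti (by omega) (hDsubB i hx)
      have hai0 : a (i-1) ≠ 0 := by
        intro h
        exact hdi0 (le_antisymm (le_trans (measure_mono hDiBi1) h.le) (zero_le'))
      have haitop := ha_top (i-1)
      have hE'meas : MeasurableSet (D i ∩ V) := (hDmeas i).inter hVopen.measurableSet
      have hE'μ : d i ≤ μ' (D i ∩ V) := by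
        have h0 : μ' (D i \ V) = 0 := by
          refine hVnull (D i) (hDmeas i) ?_
          intro x hx
          have h1 : 0 < |g x| := lt_of_lt_of_le (lt_trans (hlvpos i) hx.1) (hwle x)
          exact abs_pos.1 h1
        calc d i ≤ μ' (D i ∩ V) + μ' (D i \ V) := by
              refine le_trans (measure_mono ?_) (measure_union_le _ _)
              intro x hx
              by_cases h : x ∈ V
              · exact Or.inl ⟨hx, h⟩
              · exact Or.inr ⟨hx, h⟩
        _ = μ' (D i ∩ V) := by rw [h0, add_zero]
      have hinner : ∀ x, x ∈ D i ∩ V → x ∈ closure U →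
          ENNReal.ofReal c0 * pw (((i:ℝ)-1)*p) * a (i-1) ^ (-θ) ≤ ∫⁻ y, Fg x y ∂μ' := by
        intro x hxE hxcl
        have hgeo := geom_lb (E := EuclideanSpace ℝ (Fin (n+1))) n hnn hβ0 μ' hc1 x
            (fun ρ hρ => hden' x hxcl ρ hρ) (hsing x) (hBmeas (i-1)) hai0 haitop
        rw [hexp', ← hc0def] at hgeo
        calc ENNReal.ofReal c0 * pw (((i:ℝ)-1)*p) * a (i-1) ^ (-θ)
            = pw (((i:ℝ)-1)*p) * (ENNReal.ofReal c0 * a (i-1) ^ (-θ)) := by ring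
        _ ≤ pw (((i:ℝ)-1)*p) *
              ∫⁻ y in (B (i-1))ᶜ, ENNReal.ofReal (‖x - y‖ ^ (-((n:ℝ) + s*p))) ∂μ' :=
            mul_le_mul_right hgeo _
        _ = ∫⁻ y in (B (i-1))ᶜ,
              pw (((i:ℝ)-1)*p) * ENNReal.ofReal (‖x - y‖ ^ (-((n:ℝ) + s*p))) ∂μ' :=
            (lintegral_const_mul' _ _ (pw_ne_top _)).symm
        _ ≤ ∫⁻ y in (B (i-1))ᶜ, Fg x y ∂μ' := by
            refine lintegral_mono_ae ?_
            filter_upwards [ae_restrict_mem (hBmeas (i-1)).compl] with y hy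
            have hwy : w y ≤ lv (i-1) := not_lt.1 hy
            have hwx : lv i < w x := hxE.1.1
            have hdiff : lv (i-1) ≤ |g x - g y| := by
              have h5 : |w x - w y| ≤ |(|g x| - |g y|)| := by
                simpa [hwdef] using abs_min_sub_min |g x| |g y| (lv M)
              have h6 : |(|g x| - |g y|)| ≤ |g x - g y| := abs_abs_sub_abs_le_abs_sub _ _
              have h7 : w x - w y ≤ |w x - w y| := le_abs_self _
              have h8 := hlv2 i
              have h9 := hlvpos (i-1)
              linarith
            have hpow : (2:ℝ) ^ (((i:ℝ)-1)*p) ≤ |g x - g y| ^ p := by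
              have hlv1 : (2:ℝ) ^ (((i:ℝ)-1)*p) = (lv (i-1)) ^ p := by
                rw [hlvdef]
                dsimp only
                rw [← Real.rpow_mul (by norm_num : (0:ℝ) ≤ 2)]
                congr 1
                push_cast
                ring
              rw [hlv1]
              exact Real.rpow_le_rpow (hlvpos _).le hdiff hp0.le
            have hmul : pw (((i:ℝ)-1)*p) * ENNReal.ofReal (‖x - y‖ ^ (-((n:ℝ) + s*p))) =
                ENNReal.ofReal ((2:ℝ) ^ (((i:ℝ)-1)*p) * ‖x - y‖ ^ (-((n:ℝ) + s*p))) := by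
              rw [ENNReal.ofReal_mul (two_rpow_pos _).le]
              rfl
            rw [hmul, hFgdef]
            exact ENNReal.ofReal_le_ofReal
              (mul_le_mul_of_nonneg_right hpow (Real.rpow_nonneg (norm_nonneg _) _))
        _ ≤ ∫⁻ y, Fg x y ∂μ' := setLIntegral_le_lintegral _ _
      have hnullE : μ' ((D i ∩ V) \ closure U) = 0 := hclos _ hE'meas (fun x hx => hx.2)
      calc ENNReal.ofReal c0 * pw (((i:ℝ)-1)*p) * a (i-1) ^ (-θ) * d i
          ≤ ENNReal.ofReal c0 * pw (((i:ℝ)-1)*p) * a (i-1) ^ (-θ) * μ' (D i ∩ V) :=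
            mul_le_mul_right hE'μ _
      _ = ∫⁻ _ in D i ∩ V,
            (ENNReal.ofReal c0 * pw (((i:ℝ)-1)*p) * a (i-1) ^ (-θ)) ∂μ' :=
            (setLIntegral_const _ _).symm
      _ ≤ ∫⁻ x in D i ∩ V, (∫⁻ y, Fg x y ∂μ') ∂μ' := by
          refine lintegral_mono_ae ?_
          have h2 : ∀ᵐ x ∂μ'.restrict (D i ∩ V), x ∈ closure U := by
            rw [ae_iff, Measure.restrict_apply' hE'meas]
            refine le_antisymm (le_trans (measure_mono ?_) hnullE.le) (zero_le')
            intro x hx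
            exact ⟨hx.2, hx.1⟩
          filter_upwards [ae_restrict_mem hE'meas, h2] with x hx1 hx2
          exact hinner x hx1 hx2
    -- summing the core estimates
    have hEmeas : ∀ i : ℤ, MeasurableSet (D i ∩ V) := fun i =>
      (hDmeas i).inter hVopen.measurableSet
    have hT_ge : (∑' i : ℤ, ENNReal.ofReal c0 * pw (((i:ℝ)-1)*p) * a (i-1) ^ (-θ) * d i) ≤ Tg := by
      calc ∑' i : ℤ, ENNReal.ofReal c0 * pw (((i:ℝ)-1)*p) * a (i-1) ^ (-θ) * d i
          ≤ ∑' i : ℤ, ∫⁻ x in D i ∩ V, (∫⁻ y, Fg x y ∂μ') ∂μ' := ENNReal.tsum_le_tsum hcore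
      _ = ∫⁻ x in ⋃ i : ℤ, (D i ∩ V), (∫⁻ y, Fg x y ∂μ') ∂μ' :=
            (lintegral_iUnion hEmeas (fun i j hij =>
              Disjoint.mono inter_subset_left inter_subset_left (hDdisj hij)) _).symm
      _ ≤ ∫⁻ x, (∫⁻ y, Fg x y ∂μ') ∂μ' := setLIntegral_le_lintegral _ _
    -- absorption
    rcases eq_or_ne A 0 with hA0 | hA0
    · exact le_trans (le_trans hSd_le_A (le_of_eq hA0)) (zero_le')
    have hc0' : ENNReal.ofReal c0 ≠ 0 := by
      simp [ENNReal.ofReal_eq_zero, not_le, hc0]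
    have hc0top : ENNReal.ofReal c0 ≠ ⊤ := ENNReal.ofReal_ne_top
    have hpqθ : p + q*θ = q := by linarith [hqθ]
    have habs_i : ∀ i : ℤ, (ENNReal.ofReal c0 * pw (-q) * A^(-θ)) * (pw ((i:ℝ)*q) * d i) ≤
        ENNReal.ofReal c0 * pw (((i:ℝ)-1)*p) * a (i-1) ^ (-θ) * d i := by
      intro i
      have h1 : a (i-1) ≤ pw (-((i:ℝ)-1)*q) * A := by
        have hterm : pw (((i-1 : ℤ):ℝ)*q) * a (i-1) ≤ A := ENNReal.le_tsum (i-1)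
        calc a (i-1) = pw (-((i:ℝ)-1)*q) * (pw (((i-1 : ℤ):ℝ)*q) * a (i-1)) := by
              rw [← mul_assoc, ← pw_add,
                show -((i:ℝ)-1)*q + ((i-1 : ℤ):ℝ)*q = 0 by push_cast; ring, pw_zero, one_mul]
        _ ≤ _ := mul_le_mul_right hterm _
      have h2 : (pw (-((i:ℝ)-1)*q) * A) ^ (-θ) ≤ a (i-1) ^ (-θ) := by
        rw [ENNReal.rpow_neg, ENNReal.rpow_neg]
        exact ENNReal.inv_le_inv.2 (ENNReal.rpow_le_rpow h1 hθ0.le)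
      have h3 : (pw (-((i:ℝ)-1)*q) * A) ^ (-θ) = pw (((i:ℝ)-1)*q*θ) * A^(-θ) := by
        rw [ENNReal.mul_rpow_of_ne_zero (pw_ne_zero _) hA0, pw_rpow,
          show -((i:ℝ)-1)*q*(-θ) = ((i:ℝ)-1)*q*θ by ring]
      have h4 : (ENNReal.ofReal c0 * pw (-q) * A^(-θ)) * (pw ((i:ℝ)*q) * d i) =
          ENNReal.ofReal c0 * pw (((i:ℝ)-1)*p) * (pw (((i:ℝ)-1)*q*θ) * A^(-θ)) * d i := by
        have h5 : pw (-q) * pw ((i:ℝ)*q) = pw (((i:ℝ)-1)*p) * pw (((i:ℝ)-1)*q*θ) := by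
          rw [← pw_add, ← pw_add]
          congr 1
          linear_combination (1-(i:ℝ)) * hpqθ
        calc (ENNReal.ofReal c0 * pw (-q) * A^(-θ)) * (pw ((i:ℝ)*q) * d i)
            = ENNReal.ofReal c0 * (pw (-q) * pw ((i:ℝ)*q)) * A^(-θ) * d i := by ring
        _ = ENNReal.ofReal c0 * (pw (((i:ℝ)-1)*p) * pw (((i:ℝ)-1)*q*θ)) * A^(-θ) * d i := by
              rw [h5]
        _ = ENNReal.ofReal c0 * pw (((i:ℝ)-1)*p) * (pw (((i:ℝ)-1)*q*θ) * A^(-θ)) * d i := by ring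
      rw [h4, ← h3]
      exact mul_le_mul_left (mul_le_mul_right h2 _) _
    have habs : (ENNReal.ofReal c0 * pw (-q) * A^(-θ)) * Sd ≤ Tg := by
      calc (ENNReal.ofReal c0 * pw (-q) * A^(-θ)) * Sd
          = ∑' i : ℤ, (ENNReal.ofReal c0 * pw (-q) * A^(-θ)) * (pw ((i:ℝ)*q) * d i) := by
            rw [hSddef, ENNReal.tsum_mul_left]
      _ ≤ ∑' i : ℤ, ENNReal.ofReal c0 * pw (((i:ℝ)-1)*p) * a (i-1) ^ (-θ) * d i :=
            ENNReal.tsum_le_tsum habs_i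
      _ ≤ Tg := hT_ge
    have hstep : A^((1:ℝ)-θ) ≤ K * Tg := by
      have hSdA : Sd = Λ⁻¹ * A := by
        rw [hAΛ, ← mul_assoc, ENNReal.inv_mul_cancel hΛ0 hΛtop, one_mul]
      have h4 : A^((1:ℝ)-θ) = K * ((ENNReal.ofReal c0 * pw (-q) * A^(-θ)) * Sd) := by
        rw [hSdA, hK, show (1:ℝ)-θ = -θ + 1 by ring,
          ENNReal.rpow_add _ _ hA0 hA_top, ENNReal.rpow_one]
        calc A^(-θ) * A
            = (((ENNReal.ofReal c0)⁻¹ * ENNReal.ofReal c0) * (pw q * pw (-q)) * (Λ * Λ⁻¹)) *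
                (A^(-θ) * A) := by
              rw [ENNReal.inv_mul_cancel hc0' hc0top, ← pw_add,
                show q + -q = 0 by ring, pw_zero, ENNReal.mul_inv_cancel hΛ0 hΛtop]
              simp
        _ = (ENNReal.ofReal c0)⁻¹ * pw q * Λ *
              (ENNReal.ofReal c0 * pw (-q) * A ^ (-θ) * (Λ⁻¹ * A)) := by ring
      rw [h4]
      exact mul_le_mul_right habs _
    have hfinA : A ≤ (K * Tg) ^ ((1:ℝ)/(1-θ)) := by
      have h5 : A = (A ^ ((1:ℝ)-θ)) ^ ((1:ℝ)/(1-θ)) := by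
        rw [← ENNReal.rpow_mul, mul_one_div, div_self (by linarith : (1:ℝ)-θ ≠ 0),
          ENNReal.rpow_one]
      rw [h5]
      exact ENNReal.rpow_le_rpow hstep (div_pos one_pos (by linarith)).le
    exact le_trans hSd_le_A hfinA
  -- identification of the dyadic pieces of g with those of its truncations
  have hdg_eq : ∀ M i : ℤ, i + 2 ≤ M →
      (Dg i) = {x | lv i < min |g x| (lv M) ∧ min |g x| (lv M) ≤ lv (i+1)} := by
    intro M i hiM
    ext x
    simp only [hDgdef, mem_setOf_eq]
    constructor
    · rintro ⟨h1, h2⟩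
      have hle : |g x| ≤ lv M := le_trans h2 (hlvmono (by omega))
      rw [min_eq_left hle]
      exact ⟨h1, h2⟩
    · rintro ⟨h1, h2⟩
      rcases min_cases |g x| (lv M) with ⟨heq, hle⟩ | ⟨heq, hlt⟩
      · rw [heq] at h1 h2
        exact ⟨h1, h2⟩
      · rw [heq] at h1 h2
        exfalso
        have h8 : lv (i+2) = 2 * lv (i+1) := by
          rw [hlv2 (i+2), show i+2-1 = i+1 from by omega]
        have h9 := hlvpos (i+1)
        have h10 : lv (i+2) ≤ lv M := hlvmono (by omega)
        linarith
  set Sdg := ∑' i : ℤ, pw ((i:ℝ)*q) * μ' (Dg i) with hSdgdef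
  have hSdg : Sdg ≤ (K * Tg) ^ ((1:ℝ)/(1-θ)) := by
    rw [hSdgdef, ENNReal.tsum_eq_iSup_sum]
    refine iSup_le fun F => ?_
    obtain ⟨M0, hM0⟩ := F.exists_le
    calc ∑ i ∈ F, pw ((i:ℝ)*q) * μ' (Dg i)
        = ∑ i ∈ F, pw ((i:ℝ)*q) *
            μ' {x | lv i < min |g x| (lv (M0+2)) ∧ min |g x| (lv (M0+2)) ≤ lv (i+1)} := by
          refine Finset.sum_congr rfl fun i hi => ?_
          rw [hdg_eq (M0+2) i (by have := hM0 i hi; omega)]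
    _ ≤ ∑' i : ℤ, pw ((i:ℝ)*q) *
            μ' {x | lv i < min |g x| (lv (M0+2)) ∧ min |g x| (lv (M0+2)) ≤ lv (i+1)} :=
          ENNReal.sum_le_tsum F
    _ ≤ _ := key (M0+2)
  -- bound the q-integral of g
  have hgq_le : (∫⁻ x, (ENNReal.ofReal |g x|) ^ q ∂μ') ≤ pw q * Sdg := by
    have hind : ∀ x, (ENNReal.ofReal |g x|) ^ q =
        Set.indicator {x | g x ≠ 0} (fun x => (ENNReal.ofReal |g x|) ^ q) x := by
      intro x
      by_cases h : g x = 0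
      · have hx : x ∉ {x | g x ≠ 0} := by simp [h]
        rw [Set.indicator_of_notMem hx, h]
        simp [ENNReal.zero_rpow_of_pos hq0]
      · rw [Set.indicator_of_mem (show x ∈ {x | g x ≠ 0} from h)]
    have hmeas0 : MeasurableSet {x | g x ≠ 0} := (hgmeas (measurableSet_singleton 0)).compl
    calc (∫⁻ x, (ENNReal.ofReal |g x|) ^ q ∂μ')
        = ∫⁻ x in {x | g x ≠ 0}, (ENNReal.ofReal |g x|) ^ q ∂μ' := by
          rw [← lintegral_indicator hmeas0]
          exact lintegral_congr hind
    _ = ∫⁻ x in ⋃ i : ℤ, Dg i, (ENNReal.ofReal |g x|) ^ q ∂μ' := by rw [hgU]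
    _ = ∑' i : ℤ, ∫⁻ x in Dg i, (ENNReal.ofReal |g x|) ^ q ∂μ' :=
          lintegral_iUnion hDgmeas hDgdisj _
    _ ≤ ∑' i : ℤ, pw (((i:ℝ)+1)*q) * μ' (Dg i) := by
          refine ENNReal.tsum_le_tsum fun i => ?_
          calc (∫⁻ x in Dg i, (ENNReal.ofReal |g x|) ^ q ∂μ')
              ≤ ∫⁻ _ in Dg i, pw (((i:ℝ)+1)*q) ∂μ' := by
                refine lintegral_mono_ae ?_
                filter_upwards [ae_restrict_mem (hDgmeas i)] with x hx
                calc (ENNReal.ofReal |g x|) ^ q ≤ (ENNReal.ofReal (lv (i+1))) ^ q :=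
                      ENNReal.rpow_le_rpow (ENNReal.ofReal_le_ofReal hx.2) hq0.le
                _ = pw (((i:ℝ)+1)*q) := by
                      rw [show (ENNReal.ofReal (lv (i+1))) = pw (((i+1 : ℤ)):ℝ) from rfl,
                        pw_rpow]
                      congr 1
                      push_cast
                      ring
          _ = pw (((i:ℝ)+1)*q) * μ' (Dg i) := setLIntegral_const _ _
    _ = pw q * Sdg := by
          rw [hSdgdef, ← ENNReal.tsum_mul_left]
          refine tsum_congr fun i => ?_
          rw [← mul_assoc, ← pw_add]
          congr 2
          ring
  -- conclusion
  have hQ0 : ENNReal.ofReal q ≠ 0 := by simp [ENNReal.ofReal_eq_zero, not_le, hq0]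
  have hfinal1 : eLpNorm v (ENNReal.ofReal q) μ' =
      (∫⁻ x, (ENNReal.ofReal |g x|) ^ q ∂μ') ^ ((1:ℝ)/q) := by
    rw [eLpNorm_eq_lintegral_rpow_enorm_toReal hQ0 ENNReal.ofReal_ne_top,
      ENNReal.toReal_ofReal hq0.le]
    congr 1
    refine lintegral_congr_ae ?_
    filter_upwards [hgv] with x hx
    show ‖v x‖ₑ ^ q = _
    rw [Real.enorm_eq_ofReal_abs, hx]
  rw [hTveq, hfinal1]
  calc (∫⁻ x, (ENNReal.ofReal |g x|) ^ q ∂μ') ^ ((1:ℝ)/q)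
      ≤ (pw q * (K * Tg) ^ ((1:ℝ)/(1-θ))) ^ ((1:ℝ)/q) :=
        ENNReal.rpow_le_rpow (le_trans hgq_le (mul_le_mul_right hSdg _)) (by positivity)
  _ = (pw q) ^ ((1:ℝ)/q) * ((K * Tg) ^ ((1:ℝ)/(1-θ))) ^ ((1:ℝ)/q) :=
        ENNReal.mul_rpow_of_nonneg _ _ (by positivity)
  _ = ENNReal.ofReal 2 * (K * Tg) ^ ((1:ℝ)/p) := by
        congr 1
        · rw [pw_rpow, show q * ((1:ℝ)/q) = 1 by field_simp]
          rw [show pw 1 = ENNReal.ofReal ((2:ℝ) ^ (1:ℝ)) from rfl, Real.rpow_one]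
        · rw [← ENNReal.rpow_mul,
            show ((1:ℝ)/(1-θ)) * ((1:ℝ)/q) = (1:ℝ)/p by
              rw [← hqθ]; field_simp]
  _ = ENNReal.ofReal (2 * κ ^ ((1:ℝ)/p)) * Tg ^ ((1:ℝ)/p) := by
        rw [ENNReal.mul_rpow_of_nonneg _ _ (by positivity), hKdef,
          ENNReal.ofReal_rpow_of_pos hκ,
          ENNReal.ofReal_mul (by norm_num : (0:ℝ) ≤ 2), ← mul_assoc]

end
end

section
/- Let n ≥ 1 be an integer, and let s ∈ (0,1) and p ≥ 1 satisfy n < s p. Let Σ ⊆ ℝ^{n+1} be a set, x̄ ∈ Σ, and R > 0, and assume that c⋆ ρⁿ ≤ ℋⁿ(Σ ∩ B_ρ(x₀)) ≤ C⋆ ρⁿ for every x₀ ∈ Σ ∩ B_{2R}(x̄) and every ρ ∈ (0, R], for some constants 0 < c⋆ ≤ C⋆. Then there exists a constant C depending only on n, s, p, c⋆, and C⋆, such that the ℋⁿ-essential supremum of |v| over Σ ∩ B_r(x̄) is at most C R^{(sp−n)/p} ( [v]_{W^{s,p}(Σ∩B_R(x̄))} + (R − r)^{−s} ‖v‖_{L^p(Σ∩B_R(x̄),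 ℋⁿ)} ) for every r ∈ (0, R) and every v ∈ L^p(Σ∩B_R(x̄), ℋⁿ) with [v]_{W^{s,p}(Σ∩B_R(x̄))} < ∞. -/
open MeasureTheory Metric Set Filter
open scoped ENNReal NNReal

noncomputable section

section AuxLemmas

variable {α : Type*} [MeasurableSpace α]

lemma double_holder (μ : Measure α) [IsFiniteMeasure μ] (v : α → ℝ)
    (hv : AEMeasurable v μ) (p : ℝ) (hp : 1 ≤ p) :
    ∫⁻ y, ∫⁻ z, ENNReal.ofReal |v y - v z| ∂μ ∂μ ≤
      (μ univ * μ univ) ^ (1 - 1/p) *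
        (∫⁻ y, ∫⁻ z, ENNReal.ofReal (|v y - v z| ^ p) ∂μ ∂μ) ^ (1/p) := by
  have hp0 : 0 < p := lt_of_lt_of_le one_pos hp
  set f : α × α → ℝ := fun w => v w.1 - v w.2 with hf_def
  have hf : AEStronglyMeasurable f (μ.prod μ) :=
    (hv.aestronglyMeasurable.comp_fst).sub (hv.aestronglyMeasurable.comp_snd)
  have key1 : ∫⁻ y, ∫⁻ z, ENNReal.ofReal |v y - v z| ∂μ ∂μ
      = eLpNorm f 1 (μ.prod μ) := by
    rw [eLpNorm_one_eq_lintegral_enorm, lintegral_prod _ hf.enorm]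
    refine lintegral_congr fun y => lintegral_congr fun z => ?_
    rw [← Real.norm_eq_abs, ofReal_norm_eq_enorm]
  have key2 : eLpNorm f (ENNReal.ofReal p) (μ.prod μ)
      = (∫⁻ y, ∫⁻ z, ENNReal.ofReal (|v y - v z| ^ p) ∂μ ∂μ) ^ (1/p) := by
    rw [eLpNorm_eq_lintegral_rpow_enorm_toReal (by simpa using hp0) ENNReal.ofReal_ne_top,
      ENNReal.toReal_ofReal hp0.le,
      lintegral_prod _ (hf.enorm.pow_const p)]
    congr 1
    refine lintegral_congr fun y => lintegral_congr fun z => ?_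
    rw [← ENNReal.ofReal_rpow_of_nonneg (abs_nonneg _) hp0.le]
    rw [show |v y - v z| = ‖f (y,z)‖ from (Real.norm_eq_abs _).symm,
      ofReal_norm_eq_enorm]
  have hmono := eLpNorm_le_eLpNorm_mul_rpow_measure_univ
    (p := 1) (q := ENNReal.ofReal p) (μ := μ.prod μ)
    (by simpa using ENNReal.one_le_ofReal.2 hp) hf
  rw [key1]
  calc eLpNorm f 1 (μ.prod μ)
      ≤ eLpNorm f (ENNReal.ofReal p) (μ.prod μ) *
        (μ.prod μ) univ ^ (1/(1:ℝ≥0∞).toReal - 1/(ENNReal.ofReal p).toReal) := hmono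
    _ = (μ univ * μ univ) ^ (1 - 1/p) *
        (∫⁻ y, ∫⁻ z, ENNReal.ofReal (|v y - v z| ^ p) ∂μ ∂μ) ^ (1/p) := by
        rw [key2, mul_comm]
        congr 2
        · rw [← univ_prod_univ, Measure.prod_prod]
        · simp [ENNReal.toReal_ofReal hp0.le]

lemma avg_diff_le (μ : Measure α) [IsFiniteMeasure μ] (v : α → ℝ)
    {T B : Set α} (hTm : MeasurableSet T) (hBm : MeasurableSet B)
    (hTB : T ⊆ B) (hT : 0 < μ T) (hv : IntegrableOn v B μ)
    (hD : (∫⁻ y in B, ∫⁻ z in B, ENNReal.ofReal |v y - v z| ∂μ ∂μ) ≠ ⊤) :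
    |(μ T).toReal⁻¹ * ∫ y in T, v y ∂μ - (μ B).toReal⁻¹ * ∫ y in B, v y ∂μ| ≤
      (μ T).toReal⁻¹ * ((μ B).toReal⁻¹ *
        (∫⁻ y in B, ∫⁻ z in B, ENNReal.ofReal |v y - v z| ∂μ ∂μ).toReal) := by
  set D := ∫⁻ y in B, ∫⁻ z in B, ENNReal.ofReal |v y - v z| ∂μ ∂μ with hDdef
  have hμB : 0 < μ B := lt_of_lt_of_le hT (measure_mono hTB)
  have hBfin : μ B ≠ ⊤ := measure_ne_top μ B
  have hTfin : μ T ≠ ⊤ := measure_ne_top μ T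
  have hmT : 0 < (μ T).toReal := ENNReal.toReal_pos hT.ne' hTfin
  have hmB : 0 < (μ B).toReal := ENNReal.toReal_pos hμB.ne' hBfin
  set mT := (μ T).toReal
  set mB := (μ B).toReal
  set avB := mB⁻¹ * ∫ y in B, v y ∂μ with havB
  have hvT : IntegrableOn v T μ := hv.mono_set hTB
  -- pointwise bound
  have hpt : ∀ y : α, |v y - avB| ≤
      mB⁻¹ * (∫⁻ z in B, ENNReal.ofReal |v y - v z| ∂μ).toReal := by
    intro y
    have hint : IntegrableOn (fun z => v y - v z) B μ :=
      (integrableOn_const hBfin).sub hv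
    have h1 : ∫ z in B, (v y - v z) ∂μ = mB * v y - ∫ z in B, v z ∂μ := by
      rw [integral_sub (integrableOn_const (C := v y) hBfin) hv,
        setIntegral_const, smul_eq_mul, measureReal_def]
    have h2 : v y - avB = mB⁻¹ * ∫ z in B, (v y - v z) ∂μ := by
      rw [h1, havB]; field_simp
    have h3 : |∫ z in B, (v y - v z) ∂μ| ≤ ∫ z in B, |v y - v z| ∂μ := by
      simpa [Real.norm_eq_abs] using norm_integral_le_integral_norm (fun z => v y - v z) (μ := μ.restrict B)
    have h4 : ∫ z in B, |v y - v z| ∂μ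
        = (∫⁻ z in B, ENNReal.ofReal |v y - v z| ∂μ).toReal := by
      rw [← ofReal_integral_eq_lintegral_ofReal hint.abs
        (Eventually.of_forall fun z => abs_nonneg _),
        ENNReal.toReal_ofReal (integral_nonneg fun z => abs_nonneg _)]
    rw [h2, abs_mul, abs_of_nonneg (inv_nonneg.2 hmB.le)]
    exact mul_le_mul_of_nonneg_left (h4 ▸ h3) (inv_nonneg.2 hmB.le)
  -- integrate over B
  have hintB : ∫ y in B, |v y - avB| ∂μ ≤ mB⁻¹ * D.toReal := by
    have hintgr : IntegrableOn (fun y => |v y - avB|) B μ :=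
      (hv.sub (integrableOn_const hBfin)).abs
    have hlin : (∫⁻ y in B, ENNReal.ofReal |v y - avB| ∂μ) ≤ (μ B)⁻¹ * D := by
      have : ∀ y, ENNReal.ofReal |v y - avB| ≤
          (μ B)⁻¹ * ∫⁻ z in B, ENNReal.ofReal |v y - v z| ∂μ := by
        intro y
        calc ENNReal.ofReal |v y - avB|
            ≤ ENNReal.ofReal (mB⁻¹ * (∫⁻ z in B, ENNReal.ofReal |v y - v z| ∂μ).toReal) :=
              ENNReal.ofReal_le_ofReal (hpt y)
          _ = ENNReal.ofReal mB⁻¹ *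
              ENNReal.ofReal ((∫⁻ z in B, ENNReal.ofReal |v y - v z| ∂μ).toReal) := by
              rw [ENNReal.ofReal_mul (inv_nonneg.2 hmB.le)]
          _ ≤ (μ B)⁻¹ * ∫⁻ z in B, ENNReal.ofReal |v y - v z| ∂μ := by
              gcongr
              · rw [ENNReal.ofReal_inv_of_pos hmB, ENNReal.ofReal_toReal hBfin]
              · exact ENNReal.ofReal_toReal_le
      calc (∫⁻ y in B, ENNReal.ofReal |v y - avB| ∂μ)
          ≤ ∫⁻ y in B, (μ B)⁻¹ * ∫⁻ z in B, ENNReal.ofReal |v y - v z| ∂μ ∂μ :=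
            lintegral_mono this
        _ = (μ B)⁻¹ * D := by
            rw [lintegral_const_mul' _ _ (ENNReal.inv_ne_top.2 hμB.ne')]
    have h5 : ∫ y in B, |v y - avB| ∂μ
        = (∫⁻ y in B, ENNReal.ofReal |v y - avB| ∂μ).toReal := by
      rw [← ofReal_integral_eq_lintegral_ofReal hintgr
        (Eventually.of_forall fun z => abs_nonneg _),
        ENNReal.toReal_ofReal (integral_nonneg fun z => abs_nonneg _)]
    rw [h5]
    calc (∫⁻ y in B, ENNReal.ofReal |v y - avB| ∂μ).toReal
        ≤ ((μ B)⁻¹ * D).toReal := ENNReal.toReal_mono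
          (ENNReal.mul_ne_top (ENNReal.inv_ne_top.2 hμB.ne') hD) hlin
      _ = mB⁻¹ * D.toReal := by rw [ENNReal.toReal_mul, ENNReal.toReal_inv]
  -- average over T
  have h6 : (mT⁻¹ * ∫ y in T, v y ∂μ) - avB = mT⁻¹ * ∫ y in T, (v y - avB) ∂μ := by
    rw [integral_sub hvT (integrableOn_const hTfin),
      setIntegral_const, smul_eq_mul, measureReal_def]
    field_simp
    ring
  rw [h6, abs_mul, abs_of_nonneg (inv_nonneg.2 hmT.le)]
  refine mul_le_mul_of_nonneg_left ?_ (inv_nonneg.2 hmT.le)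
  calc |∫ y in T, (v y - avB) ∂μ| ≤ ∫ y in T, |v y - avB| ∂μ := by
        simpa [Real.norm_eq_abs] using
          norm_integral_le_integral_norm (fun y => v y - avB) (μ := μ.restrict T)
    _ ≤ ∫ y in B, |v y - avB| ∂μ := by
        refine setIntegral_mono_set
          ((hv.sub (integrableOn_const hBfin)).abs)
          (Eventually.of_forall fun y => abs_nonneg _)
          (HasSubset.Subset.eventuallyLE hTB)
    _ ≤ mB⁻¹ * D.toReal := hintB

lemma avg_le (μ : Measure α) [IsFiniteMeasure μ] (v : α → ℝ)
    {T : Set α} (hTm : MeasurableSet T) (hT : 0 < μ T)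
    (hv : AEStronglyMeasurable v μ) (hvi : IntegrableOn v T μ)
    (p : ℝ) (hp : 1 ≤ p) (hN : eLpNorm v (ENNReal.ofReal p) μ ≠ ⊤) :
    |(μ T).toReal⁻¹ * ∫ y in T, v y ∂μ| ≤
      (μ T).toReal⁻¹ * (((μ T) ^ (1 - 1/p)).toReal *
        (eLpNorm v (ENNReal.ofReal p) μ).toReal) := by
  have hp0 : 0 < p := lt_of_lt_of_le one_pos hp
  have hTfin : μ T ≠ ⊤ := measure_ne_top μ T
  have hmT : 0 < (μ T).toReal := ENNReal.toReal_pos hT.ne' hTfin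
  have key : ENNReal.ofReal (∫ y in T, |v y| ∂μ) ≤
      (μ T) ^ (1 - 1/p) * eLpNorm v (ENNReal.ofReal p) μ := by
    rw [ofReal_integral_eq_lintegral_ofReal hvi.abs
      (Eventually.of_forall fun z => abs_nonneg _)]
    have h1 : (∫⁻ y in T, ENNReal.ofReal |v y| ∂μ) = eLpNorm v 1 (μ.restrict T) := by
      rw [eLpNorm_one_eq_lintegral_enorm]
      exact lintegral_congr fun y => by rw [← Real.norm_eq_abs, ofReal_norm_eq_enorm]
    rw [h1]
    calc eLpNorm v 1 (μ.restrict T)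
        ≤ eLpNorm v (ENNReal.ofReal p) (μ.restrict T) *
          (μ.restrict T) univ ^ (1/(1:ℝ≥0∞).toReal - 1/(ENNReal.ofReal p).toReal) :=
          eLpNorm_le_eLpNorm_mul_rpow_measure_univ
            (by simpa using ENNReal.one_le_ofReal.2 hp) (hv.restrict)
      _ ≤ (μ T) ^ (1 - 1/p) * eLpNorm v (ENNReal.ofReal p) μ := by
          rw [mul_comm, Measure.restrict_apply_univ,
            show 1/(1:ℝ≥0∞).toReal - 1/(ENNReal.ofReal p).toReal = 1 - 1/p by
              simp [ENNReal.toReal_ofReal hp0.le]]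
          exact mul_le_mul_of_nonneg_left
            (eLpNorm_mono_measure v Measure.restrict_le_self) (zero_le)
  have habs : |(μ T).toReal⁻¹ * ∫ y in T, v y ∂μ| ≤
      (μ T).toReal⁻¹ * ∫ y in T, |v y| ∂μ := by
    rw [abs_mul, abs_of_nonneg (inv_nonneg.2 hmT.le)]
    refine mul_le_mul_of_nonneg_left ?_ (inv_nonneg.2 hmT.le)
    simpa [Real.norm_eq_abs] using norm_integral_le_integral_norm v (μ := μ.restrict T)
  refine le_trans habs (mul_le_mul_of_nonneg_left ?_ (inv_nonneg.2 hmT.le))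
  have hexp : (0:ℝ) ≤ 1 - 1/p := by
    have : 1/p ≤ 1 := by
      rw [div_le_one hp0]; exact hp
    linarith
  have h2 := ENNReal.toReal_mono
    (ENNReal.mul_ne_top (ENNReal.rpow_ne_top_of_nonneg hexp hTfin) hN) key
  rw [ENNReal.toReal_ofReal (integral_nonneg fun z => abs_nonneg _),
    ENNReal.toReal_mul] at h2
  exact h2

lemma collect1 (n : ℕ) {s p cst Cst : ℝ} (hp : 1 ≤ p)
    (hc : 0 < cst) (hC : 0 < Cst) :
    ∃ K : ℝ, 0 < K ∧ ∀ t A : ℝ, 0 < t → 0 ≤ A →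
      (cst * (t/2/2)^n)⁻¹ * ((cst * (t/2)^n)⁻¹ *
        (((Cst*(2*t)^n) * (Cst*(2*t)^n)) ^ (1 - 1/p) *
          ((2*t)^((n:ℝ)+s*p) * A^p) ^ (1/p)))
      = K * (t ^ ((s*p-(n:ℝ))/p) * A) := by
  have hp0 : 0 < p := lt_of_lt_of_le one_pos hp
  refine ⟨(cst⁻¹ * 4^n) * (cst⁻¹ * 2^n) *
    ((Cst*2^n) ^ (1-1/p) * (Cst*2^n) ^ (1-1/p)) * (2:ℝ) ^ (((n:ℝ)+s*p)/p), by positivity,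
    fun t A ht hA => ?_⟩
  have h2t : (0:ℝ) < 2*t := by linarith
  have f1 : ((2*t)^((n:ℝ)+s*p) * A^p) ^ (1/p)
      = (2:ℝ)^(((n:ℝ)+s*p)/p) * t^(((n:ℝ)+s*p)/p) * A := by
    rw [Real.mul_rpow (Real.rpow_nonneg h2t.le _) (Real.rpow_nonneg hA _),
      ← Real.rpow_mul h2t.le, ← Real.rpow_mul hA, mul_one_div,
      mul_one_div_cancel hp0.ne', Real.rpow_one,
      Real.mul_rpow (by norm_num : (0:ℝ) ≤ 2) ht.le]
  have f2 : ((Cst*(2*t)^n) * (Cst*(2*t)^n)) ^ (1 - 1/p)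
      = ((Cst*2^n) ^ (1-1/p) * t ^ ((n:ℝ)*(1-1/p))) *
        ((Cst*2^n) ^ (1-1/p) * t ^ ((n:ℝ)*(1-1/p))) := by
    have hq : (0:ℝ) ≤ Cst*(2*t)^n := by positivity
    rw [Real.mul_rpow hq hq]
    congr 1 <;>
    · rw [mul_pow, show Cst * ((2:ℝ)^n * t^n) = (Cst * 2^n) * t^n by ring,
        Real.mul_rpow (by positivity) (by positivity),
        ← Real.rpow_natCast t n, ← Real.rpow_mul ht.le]
  have g1 : (cst * (t/2/2)^n)⁻¹ = (cst⁻¹ * 4^n) * t ^ (-(n:ℝ)) := by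
    rw [show t/2/2 = t/4 by ring, div_pow, Real.rpow_neg ht.le, ← Real.rpow_natCast t n]
    field_simp
  have g2 : (cst * (t/2)^n)⁻¹ = (cst⁻¹ * 2^n) * t ^ (-(n:ℝ)) := by
    rw [div_pow, Real.rpow_neg ht.le, ← Real.rpow_natCast t n]
    field_simp
  rw [f1, f2, g1, g2]
  have merge : t ^ (-(n:ℝ)) * t ^ (-(n:ℝ)) * t ^ ((n:ℝ)*(1-1/p)) * t ^ ((n:ℝ)*(1-1/p))
      * t ^ (((n:ℝ)+s*p)/p) = t ^ ((s*p-(n:ℝ))/p) := by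
    rw [← Real.rpow_add ht, ← Real.rpow_add ht, ← Real.rpow_add ht, ← Real.rpow_add ht]
    congr 1
    first
    | (field_simp; ring)
    | field_simp
  calc (cst⁻¹ * 4^n) * t ^ (-(n:ℝ)) * ((cst⁻¹ * 2^n) * t ^ (-(n:ℝ)) *
        ((Cst*2^n) ^ (1-1/p) * t ^ ((n:ℝ)*(1-1/p)) * ((Cst*2^n) ^ (1-1/p) * t ^ ((n:ℝ)*(1-1/p))) *
          ((2:ℝ)^(((n:ℝ)+s*p)/p) * t^(((n:ℝ)+s*p)/p) * A)))
      = ((cst⁻¹ * 4^n) * (cst⁻¹ * 2^n) * ((Cst*2^n) ^ (1-1/p) * (Cst*2^n) ^ (1-1/p)) *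
          (2:ℝ) ^ (((n:ℝ)+s*p)/p)) *
        ((t ^ (-(n:ℝ)) * t ^ (-(n:ℝ)) * t ^ ((n:ℝ)*(1-1/p)) * t ^ ((n:ℝ)*(1-1/p))
          * t ^ (((n:ℝ)+s*p)/p)) * A) := by ring
    _ = _ := by rw [merge]

lemma collect2 (n : ℕ) {p cst Cst : ℝ} (hp : 1 ≤ p)
    (hc : 0 < cst) (hC : 0 < Cst) :
    ∃ K : ℝ, 0 < K ∧ ∀ t : ℝ, 0 < t →
      (cst * (t/2/2)^n)⁻¹ * (Cst * t^n) ^ (1 - 1/p)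
      = K * t ^ (-(n:ℝ)/p) := by
  have hp0 : 0 < p := lt_of_lt_of_le one_pos hp
  refine ⟨(cst⁻¹ * 4^n) * Cst ^ (1-1/p), by positivity, fun t ht => ?_⟩
  have g1 : (cst * (t/2/2)^n)⁻¹ = (cst⁻¹ * 4^n) * t ^ (-(n:ℝ)) := by
    rw [show t/2/2 = t/4 by ring, div_pow, Real.rpow_neg ht.le, ← Real.rpow_natCast t n]
    field_simp
  have g2 : (Cst * t^n) ^ (1-1/p) = Cst ^ (1-1/p) * t ^ ((n:ℝ)*(1-1/p)) := by
    rw [Real.mul_rpow hC.le (by positivity), ← Real.rpow_natCast t n, ← Real.rpow_mul ht.le]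
  rw [g1, g2]
  have merge : t ^ (-(n:ℝ)) * t ^ ((n:ℝ)*(1-1/p)) = t ^ (-(n:ℝ)/p) := by
    rw [← Real.rpow_add ht]
    congr 1
    first
    | (field_simp; ring)
    | field_simp
  calc (cst⁻¹ * 4^n) * t ^ (-(n:ℝ)) * (Cst ^ (1-1/p) * t ^ ((n:ℝ)*(1-1/p)))
      = ((cst⁻¹ * 4^n) * Cst ^ (1-1/p)) * (t ^ (-(n:ℝ)) * t ^ ((n:ℝ)*(1-1/p))) := by ring
    _ = _ := by rw [merge]

end AuxLemmas
set_option maxHeartbeats 1600000 in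
/-- Morrey-type `L^∞` estimate for `W^{s,p}` functions when `n < sp`
(Proposition 5.5). -/
theorem fractional_morrey (n : ℕ) (hn : 1 ≤ n) (s p : ℝ)
    (hs : s ∈ Ioo (0 : ℝ) 1) (hp : 1 ≤ p) (hnsp : (n : ℝ) < s * p)
    (cstar Cstar : ℝ) (hcstar : 0 < cstar) (hcC : cstar ≤ Cstar) :
    ∃ C : ℝ, 0 < C ∧
      ∀ (S : Set (EuclideanSpace ℝ (Fin (n + 1))))
        (xbar : EuclideanSpace ℝ (Fin (n + 1))) (R : ℝ),
        xbar ∈ S → 0 < R →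
        (∀ x₀ ∈ S ∩ ball xbar (2 * R), ∀ ρ ∈ Ioc (0 : ℝ) R,
          ENNReal.ofReal (cstar * ρ ^ n) ≤ μH[(n : ℝ)] (S ∩ ball x₀ ρ) ∧
            μH[(n : ℝ)] (S ∩ ball x₀ ρ) ≤ ENNReal.ofReal (Cstar * ρ ^ n)) →
        ∀ r ∈ Ioo (0 : ℝ) R,
          ∀ v : EuclideanSpace ℝ (Fin (n + 1)) → ℝ,
            MemLp v (ENNReal.ofReal p) (μH[(n : ℝ)].restrict (S ∩ ball xbar R)) →
            fracSeminorm n s p (S ∩ ball xbar R) v ≠ ⊤ →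
            eLpNorm v ⊤ (μH[(n : ℝ)].restrict (S ∩ ball xbar r))
              ≤ ENNReal.ofReal (C * R ^ ((s * p - n) / p)) *
                  (fracSeminorm n s p (S ∩ ball xbar R) v +
                    ENNReal.ofReal ((R - r) ^ (-s)) *
                      eLpNorm v (ENNReal.ofReal p)
                        (μH[(n : ℝ)].restrict (S ∩ ball xbar R))) := by
  obtain ⟨hs0, hs1⟩ := hs
  have hp0 : 0 < p := lt_of_lt_of_le one_pos hp
  have hC0 : 0 < Cstar := lt_of_lt_of_le hcstar hcC
  have hea : 0 < (s*p - (n:ℝ))/p := div_pos (by linarith) hp0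
  obtain ⟨K1, hK1, hcoll1⟩ := collect1 n (s := s) hp hcstar hC0
  obtain ⟨K2, hK2, hcoll2⟩ := collect2 n (p := p) hp hcstar hC0
  set β : ℝ := (2:ℝ)⁻¹ ^ ((s*p-(n:ℝ))/p) with hβdef
  have hβ0 : 0 ≤ β := Real.rpow_nonneg (by norm_num) _
  have hβ1 : β < 1 := Real.rpow_lt_one (by norm_num) (by norm_num) hea
  have hgeo : ∀ N : ℕ, ∑ i ∈ Finset.range N, β ^ i ≤ (1-β)⁻¹ := by
    intro N
    calc ∑ i ∈ Finset.range N, β ^ i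
        ≤ ∑' i : ℕ, β ^ i := Summable.sum_le_tsum _ (fun i _ => pow_nonneg hβ0 i)
          (summable_geometric_of_lt_one hβ0 hβ1)
      _ = (1-β)⁻¹ := tsum_geometric_of_lt_one hβ0 hβ1
  have hKgeo : 0 < (1-β)⁻¹ := inv_pos.2 (by linarith)
  refine ⟨K1 * (1-β)⁻¹ + K2, add_pos (mul_pos hK1 hKgeo) hK2, ?_⟩
  intro S xbar R hxbarS hR hdens r hr v hmem hfrac
  set U : Set (EuclideanSpace ℝ (Fin (n+1))) := S ∩ ball xbar R with hU
  set μ : Measure (EuclideanSpace ℝ (Fin (n+1))) := μH[(n:ℝ)].restrict U with hμdef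
  have hUmass : μH[(n:ℝ)] U ≤ ENNReal.ofReal (Cstar * R^n) :=
    (hdens xbar ⟨hxbarS, mem_ball_self (by linarith)⟩ R ⟨hR, le_refl R⟩).2
  haveI hfin : IsFiniteMeasure μ :=
    ⟨by rw [hμdef, Measure.restrict_apply_univ]; exact lt_of_le_of_lt hUmass ENNReal.ofReal_lt_top⟩
  have hvsm : AEStronglyMeasurable v μ := hmem.1
  have hvint : Integrable v μ := hmem.integrable (by simpa using ENNReal.one_le_ofReal.2 hp)
  set Nv := (eLpNorm v (ENNReal.ofReal p) μ).toReal with hNvdef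
  have hNfin : eLpNorm v (ENNReal.ofReal p) μ ≠ ⊤ := hmem.2.ne
  set Afull := ∫⁻ x in U, ∫⁻ y in U,
      ENNReal.ofReal (|v x - v y| ^ p * ‖x - y‖ ^ (-((n : ℝ) + s * p)))
        ∂μH[(n : ℝ)] ∂μH[(n : ℝ)] with hAfulldef
  have hfrac_eq : fracSeminorm n s p U v = Afull ^ (1/p) := rfl
  have hAfull_eq : Afull = (fracSeminorm n s p U v) ^ p := by
    rw [hfrac_eq, ← ENNReal.rpow_mul, one_div, inv_mul_cancel₀ hp0.ne', ENNReal.rpow_one]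
  have hAfull_ne : Afull ≠ ⊤ := by
    rw [hAfull_eq]; exact ENNReal.rpow_ne_top_of_nonneg hp0.le hfrac
  set A := (fracSeminorm n s p U v).toReal with hAdef
  have hA0 : 0 ≤ A := ENNReal.toReal_nonneg
  have hAtoReal : Afull.toReal = A ^ p := by
    rw [hAfull_eq, ← ENNReal.toReal_rpow]
  set d := R - r with hddef
  have hd0 : 0 < d := by simp only [hddef]; linarith [hr.2]
  have hdR : d ≤ R := by simp only [hddef]; linarith [hr.1]
  -- Lebesgue differentiation via Besicovitch
  have hloc : LocallyIntegrable v μ := hvint.locallyIntegrable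
  have hbes : ∀ᵐ x ∂μ, Tendsto (fun ρ : ℝ => ⨍ y in closedBall x ρ, v y ∂μ)
      (nhdsWithin 0 (Ioi 0)) (nhds (v x)) := by
    filter_upwards [(Besicovitch.vitaliFamily μ).ae_tendsto_average hloc] with x hx
    exact hx.comp (Besicovitch.tendsto_filterAt μ x)
  set ν : Measure (EuclideanSpace ℝ (Fin (n+1))) := μH[(n:ℝ)].restrict (S ∩ ball xbar r)
    with hνdef
  have hνμ : ν ≤ μ :=
    Measure.restrict_mono (inter_subset_inter_right S (ball_subset_ball hr.2.le)) le_rfl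
  have hbesν : ∀ᵐ x ∂ν, Tendsto (fun ρ : ℝ => ⨍ y in closedBall x ρ, v y ∂μ)
      (nhdsWithin 0 (Ioi 0)) (nhds (v x)) := hbes.filter_mono (ae_mono hνμ)
  have hclν : ∀ᵐ x ∂ν, x ∈ closure (S ∩ ball xbar r) := by
    rw [ae_iff]
    have hmeq : {x | ¬ x ∈ closure (S ∩ ball xbar r)} = (closure (S ∩ ball xbar r))ᶜ := rfl
    rw [hmeq, hνdef, Measure.restrict_apply isClosed_closure.measurableSet.compl]
    have : (closure (S ∩ ball xbar r))ᶜ ∩ (S ∩ ball xbar r) = ∅ := by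
      rw [← subset_empty_iff]
      intro y hy
      exact (hy.1 (subset_closure hy.2)).elim
    rw [this, measure_empty]
  set CC := K1 * (1-β)⁻¹ + K2 with hCCdef
  have hCC0 : 0 < CC := add_pos (mul_pos hK1 hKgeo) hK2
  set Cb := CC * R ^ ((s*p-(n:ℝ))/p) * (A + d^(-s) * Nv) with hCbdef
  have main : ∀ᵐ x ∂ν, ‖v x‖ ≤ Cb := by
    filter_upwards [hbesν, hclν] with x hx hxcl
    have hxr : dist x xbar ≤ r := by
      have h1 : closure (S ∩ ball xbar r) ⊆ closedBall xbar r := by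
        rw [← closure_ball xbar hr.1.ne']
        exact closure_mono inter_subset_right
      exact mem_closedBall.1 (h1 hxcl)
    have hmass_low : ∀ ρ : ℝ, 0 < ρ → ρ ≤ d/2 →
        ENNReal.ofReal (cstar * (ρ/2)^n) ≤ μ (closedBall x ρ) := by
      intro ρ hρ0 hρd
      obtain ⟨x₀, hx₀mem, hx₀d⟩ := Metric.mem_closure_iff.1 hxcl (ρ/2) (by linarith)
      have hdr : d ≤ R - r := le_of_eq hddef
      have hsub : S ∩ ball x₀ (ρ/2) ⊆ closedBall x ρ ∩ U := by
        intro y hy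
        have h2 : dist y x₀ < ρ/2 := mem_ball.1 hy.2
        have h3 : dist x₀ x < ρ/2 := by rw [dist_comm]; exact hx₀d
        have hyx : dist y x ≤ ρ := by
          have := dist_triangle y x₀ x
          linarith
        refine ⟨mem_closedBall.2 hyx, hy.1, mem_ball.2 ?_⟩
        have h4 : dist y xbar ≤ dist y x₀ + dist x₀ xbar := dist_triangle _ _ _
        have h5 : dist x₀ xbar < r := mem_ball.1 hx₀mem.2
        linarith
      calc ENNReal.ofReal (cstar * (ρ/2)^n)
          ≤ μH[(n:ℝ)] (S ∩ ball x₀ (ρ/2)) :=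
            (hdens x₀ ⟨hx₀mem.1, mem_ball.2 (by
              have h5 : dist x₀ xbar < r := mem_ball.1 hx₀mem.2
              linarith [hr.2])⟩ (ρ/2)
              ⟨by linarith, by linarith [hr.1]⟩).1
        _ ≤ μH[(n:ℝ)] (closedBall x ρ ∩ U) := measure_mono hsub
        _ = μ (closedBall x ρ) := (Measure.restrict_apply measurableSet_closedBall).symm
    have hmass_up : ∀ ρ : ℝ, 0 < ρ → ρ ≤ d/2 →
        μ (closedBall x ρ) ≤ ENNReal.ofReal (Cstar * (2*ρ)^n) := by
      intro ρ hρ0 hρd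
      obtain ⟨x₀, hx₀mem, hx₀d⟩ := Metric.mem_closure_iff.1 hxcl (ρ/2) (by linarith)
      have hsub : closedBall x ρ ∩ U ⊆ S ∩ ball x₀ (2*ρ) := by
        intro y hy
        refine ⟨hy.2.1, mem_ball.2 ?_⟩
        have h1 : dist y x ≤ ρ := mem_closedBall.1 hy.1
        have h2 : dist x x₀ < ρ/2 := hx₀d
        have := dist_triangle y x x₀
        linarith
      calc μ (closedBall x ρ) = μH[(n:ℝ)] (closedBall x ρ ∩ U) :=
            Measure.restrict_apply measurableSet_closedBall
        _ ≤ μH[(n:ℝ)] (S ∩ ball x₀ (2*ρ)) := measure_mono hsub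
        _ ≤ ENNReal.ofReal (Cstar * (2*ρ)^n) :=
            (hdens x₀ ⟨hx₀mem.1, mem_ball.2 (by
              have h5 : dist x₀ xbar < r := mem_ball.1 hx₀mem.2
              linarith [hr.2])⟩ (2*ρ) ⟨by linarith, by linarith [hr.1]⟩).2
    set δ : ℕ → ℝ := fun k => d / 2^(k+1) with hδdef
    have hδpos : ∀ k, 0 < δ k := fun k => div_pos hd0 (by positivity)
    have hδle : ∀ k, δ k ≤ d/2 := by
      intro k
      have h2 : (2:ℝ) ≤ 2^(k+1) := by
        calc (2:ℝ) = 2^1 := (pow_one 2).symm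
          _ ≤ 2^(k+1) := by
              apply pow_le_pow_right₀ (by norm_num)
              omega
      rw [hδdef]
      rw [div_le_div_iff₀ (by positivity) (by norm_num)]
      exact mul_le_mul_of_nonneg_left h2 hd0.le
    have hδsucc : ∀ k, δ (k+1) = δ k / 2 := by
      intro k
      simp only [hδdef]
      rw [pow_succ, ← div_div]
    set a : ℕ → ℝ := fun k => ⨍ y in closedBall x (δ k), v y ∂μ with hadef
    have hδtend : Tendsto δ atTop (nhdsWithin 0 (Ioi 0)) := by
      apply tendsto_nhdsWithin_of_tendsto_nhds_of_eventually_within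
      · have h0 : Tendsto (fun k : ℕ => (1/2:ℝ)^k) atTop (nhds 0) :=
          tendsto_pow_atTop_nhds_zero_of_lt_one (by norm_num) (by norm_num)
        have h1 : Tendsto (fun k : ℕ => d * ((1/2:ℝ)^(k+1))) atTop (nhds 0) := by
          have := ((h0.comp (tendsto_add_atTop_nat 1)).const_mul d)
          simpa using this
        apply h1.congr
        intro k
        simp only [hδdef]
        rw [div_pow, one_pow, mul_one_div]
      · exact Eventually.of_forall (fun k => hδpos k)
    have halim : Tendsto a atTop (nhds (v x)) := hx.comp hδtend
    have hm0 : ∀ k, 0 < μ (closedBall x (δ k)) := fun k =>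
      lt_of_lt_of_le (ENNReal.ofReal_pos.2 (by positivity)) (hmass_low _ (hδpos k) (hδle k))
    have hmlow : ∀ k, cstar * (δ k/2)^n ≤ (μ (closedBall x (δ k))).toReal := by
      intro k
      have h := ENNReal.toReal_mono (measure_ne_top μ _) (hmass_low _ (hδpos k) (hδle k))
      rwa [ENNReal.toReal_ofReal (by positivity)] at h
    have hmup : ∀ k, (μ (closedBall x (δ k))).toReal ≤ Cstar * (2*δ k)^n := by
      intro k
      have h := ENNReal.toReal_mono ENNReal.ofReal_ne_top (hmass_up _ (hδpos k) (hδle k))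
      rwa [ENNReal.toReal_ofReal (by positivity)] at h
    have ha_eq : ∀ k, a k = (μ (closedBall x (δ k))).toReal⁻¹ *
        ∫ y in closedBall x (δ k), v y ∂μ := fun k => by
      simp only [hadef]
      rw [setAverage_eq, smul_eq_mul, measureReal_def]
    have hexp : (0:ℝ) ≤ 1 - 1/p := by
      have h9 : 1/p ≤ 1 := by rw [div_le_one hp0]; exact hp
      linarith
    have he0 : (0:ℝ) < (n:ℝ) + s*p := by
      have : (0:ℝ) ≤ (n:ℝ) := Nat.cast_nonneg n
      linarith
    have hstep : ∀ k, |a (k+1) - a k| ≤ K1 * ((δ k)^((s*p-(n:ℝ))/p) * A) := by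
      intro k
      have hTB : closedBall x (δ (k+1)) ⊆ closedBall x (δ k) :=
        closedBall_subset_closedBall (by rw [hδsucc]; linarith [hδpos k])
      have h2δ : (0:ℝ) < 2*δ k := by linarith [hδpos k]
      -- kernel comparison
      have hG : (∫⁻ y in closedBall x (δ k), ∫⁻ z in closedBall x (δ k),
          ENNReal.ofReal (|v y - v z|^p) ∂μ ∂μ)
          ≤ ENNReal.ofReal ((2*δ k)^((n:ℝ)+s*p)) * Afull := by
        have hker : ∀ y ∈ closedBall x (δ k), ∀ z ∈ closedBall x (δ k),
            ENNReal.ofReal (|v y - v z|^p) ≤ ENNReal.ofReal ((2*δ k)^((n:ℝ)+s*p)) *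
              ENNReal.ofReal (|v y - v z|^p * ‖y - z‖ ^ (-((n:ℝ)+s*p))) := by
          intro y hy z hz
          rcases eq_or_ne y z with hyz | hyz
          · rw [hyz]
            simp [Real.zero_rpow hp0.ne']
          · have hnz : 0 < ‖y - z‖ := by
              rw [norm_pos_iff, sub_ne_zero]
              exact hyz
            have hle2 : ‖y - z‖ ≤ 2*δ k := by
              have h1 : dist y x ≤ δ k := mem_closedBall.1 hy
              have h2 : dist z x ≤ δ k := mem_closedBall.1 hz
              have h3 := dist_triangle y x z
              rw [← dist_eq_norm]
              rw [dist_comm x z] at h3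
              linarith
            have hkk : (2*δ k)^(-((n:ℝ)+s*p)) ≤ ‖y - z‖^(-((n:ℝ)+s*p)) :=
              Real.rpow_le_rpow_of_nonpos hnz hle2 (by linarith)
            rw [← ENNReal.ofReal_mul (by positivity)]
            apply ENNReal.ofReal_le_ofReal
            have habs : 0 ≤ |v y - v z|^p := Real.rpow_nonneg (abs_nonneg _) _
            calc |v y - v z|^p
                = (2*δ k)^((n:ℝ)+s*p) * ((2*δ k)^(-((n:ℝ)+s*p)) * |v y - v z|^p) := by
                  rw [← mul_assoc, ← Real.rpow_add h2δ, add_neg_cancel,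
                    Real.rpow_zero, one_mul]
              _ ≤ (2*δ k)^((n:ℝ)+s*p) * (‖y - z‖^(-((n:ℝ)+s*p)) * |v y - v z|^p) :=
                  mul_le_mul_of_nonneg_left
                    (mul_le_mul_of_nonneg_right hkk habs) (Real.rpow_nonneg h2δ.le _)
              _ = (2*δ k)^((n:ℝ)+s*p) * (|v y - v z|^p * ‖y - z‖^(-((n:ℝ)+s*p))) := by
                  ring
        have hinner : ∀ᵐ y ∂(μ.restrict (closedBall x (δ k))),
            (∫⁻ z in closedBall x (δ k), ENNReal.ofReal (|v y - v z|^p) ∂μ)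
            ≤ ENNReal.ofReal ((2*δ k)^((n:ℝ)+s*p)) *
              ∫⁻ z, ENNReal.ofReal (|v y - v z|^p * ‖y - z‖ ^ (-((n:ℝ)+s*p))) ∂μ := by
          filter_upwards [ae_restrict_mem measurableSet_closedBall] with y hy
          calc (∫⁻ z in closedBall x (δ k), ENNReal.ofReal (|v y - v z|^p) ∂μ)
              ≤ ∫⁻ z in closedBall x (δ k), ENNReal.ofReal ((2*δ k)^((n:ℝ)+s*p)) *
                  ENNReal.ofReal (|v y - v z|^p * ‖y - z‖ ^ (-((n:ℝ)+s*p))) ∂μ := by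
                refine lintegral_mono_ae ?_
                filter_upwards [ae_restrict_mem measurableSet_closedBall] with z hz
                exact hker y hy z hz
            _ = ENNReal.ofReal ((2*δ k)^((n:ℝ)+s*p)) *
                ∫⁻ z in closedBall x (δ k),
                  ENNReal.ofReal (|v y - v z|^p * ‖y - z‖ ^ (-((n:ℝ)+s*p))) ∂μ :=
                lintegral_const_mul' _ _ ENNReal.ofReal_ne_top
            _ ≤ _ := mul_le_mul_right (setLIntegral_le_lintegral _ _) _
        calc (∫⁻ y in closedBall x (δ k), ∫⁻ z in closedBall x (δ k),
              ENNReal.ofReal (|v y - v z|^p) ∂μ ∂μ)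
            ≤ ∫⁻ y in closedBall x (δ k), ENNReal.ofReal ((2*δ k)^((n:ℝ)+s*p)) *
                ∫⁻ z, ENNReal.ofReal (|v y - v z|^p * ‖y - z‖ ^ (-((n:ℝ)+s*p))) ∂μ ∂μ :=
              lintegral_mono_ae hinner
          _ = ENNReal.ofReal ((2*δ k)^((n:ℝ)+s*p)) * ∫⁻ y in closedBall x (δ k),
                (∫⁻ z, ENNReal.ofReal (|v y - v z|^p * ‖y - z‖ ^ (-((n:ℝ)+s*p))) ∂μ) ∂μ :=
              lintegral_const_mul' _ _ ENNReal.ofReal_ne_top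
          _ ≤ ENNReal.ofReal ((2*δ k)^((n:ℝ)+s*p)) * ∫⁻ y,
                (∫⁻ z, ENNReal.ofReal (|v y - v z|^p * ‖y - z‖ ^ (-((n:ℝ)+s*p))) ∂μ) ∂μ :=
              mul_le_mul_right (setLIntegral_le_lintegral _ _) _
          _ = ENNReal.ofReal ((2*δ k)^((n:ℝ)+s*p)) * Afull := by rw [hAfulldef, hμdef]
      have hDle : (∫⁻ y in closedBall x (δ k), ∫⁻ z in closedBall x (δ k),
          ENNReal.ofReal |v y - v z| ∂μ ∂μ)
          ≤ (μ (closedBall x (δ k)) * μ (closedBall x (δ k))) ^ (1-1/p) *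
            (ENNReal.ofReal ((2*δ k)^((n:ℝ)+s*p)) * Afull) ^ (1/p) := by
        have h2 := double_holder (μ.restrict (closedBall x (δ k))) v
          (hvsm.aemeasurable.restrict) p hp
        rw [Measure.restrict_apply_univ] at h2
        refine le_trans h2 (mul_le_mul_right (ENNReal.rpow_le_rpow hG (by positivity)) _)
      have hfinRHS : (μ (closedBall x (δ k)) * μ (closedBall x (δ k))) ^ (1-1/p) *
          (ENNReal.ofReal ((2*δ k)^((n:ℝ)+s*p)) * Afull) ^ (1/p) ≠ ⊤ :=
        ENNReal.mul_ne_top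
          (ENNReal.rpow_ne_top_of_nonneg hexp
            (ENNReal.mul_ne_top (measure_ne_top μ _) (measure_ne_top μ _)))
          (ENNReal.rpow_ne_top_of_nonneg (by positivity)
            (ENNReal.mul_ne_top ENNReal.ofReal_ne_top hAfull_ne))
      have hDfin : (∫⁻ y in closedBall x (δ k), ∫⁻ z in closedBall x (δ k),
          ENNReal.ofReal |v y - v z| ∂μ ∂μ) ≠ ⊤ := ne_top_of_le_ne_top hfinRHS hDle
      have h1 := avg_diff_le μ v measurableSet_closedBall measurableSet_closedBall hTB
        (hm0 (k+1)) (hvint.integrableOn) hDfin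
      rw [← ha_eq (k+1), ← ha_eq k] at h1
      have hDr : (∫⁻ y in closedBall x (δ k), ∫⁻ z in closedBall x (δ k),
          ENNReal.ofReal |v y - v z| ∂μ ∂μ).toReal
          ≤ ((Cstar*(2*δ k)^n) * (Cstar*(2*δ k)^n)) ^ (1-1/p) *
            ((2*δ k)^((n:ℝ)+s*p) * A^p) ^ (1/p) := by
        have h3 := ENNReal.toReal_mono hfinRHS hDle
        rw [ENNReal.toReal_mul, ← ENNReal.toReal_rpow, ← ENNReal.toReal_rpow,
          ENNReal.toReal_mul, ENNReal.toReal_mul,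
          ENNReal.toReal_ofReal (by positivity), hAtoReal] at h3
        refine le_trans h3 (mul_le_mul_of_nonneg_right ?_ (Real.rpow_nonneg (by positivity) _))
        apply Real.rpow_le_rpow (by positivity) ?_ hexp
        exact mul_le_mul (hmup k) (hmup k) ENNReal.toReal_nonneg (by positivity)
      calc |a (k+1) - a k|
          ≤ (μ (closedBall x (δ (k+1)))).toReal⁻¹ *
            ((μ (closedBall x (δ k))).toReal⁻¹ *
              (∫⁻ y in closedBall x (δ k), ∫⁻ z in closedBall x (δ k),
                ENNReal.ofReal |v y - v z| ∂μ ∂μ).toReal) := h1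
        _ ≤ (cstar * (δ k/2/2)^n)⁻¹ * ((cstar * (δ k/2)^n)⁻¹ *
              (((Cstar*(2*δ k)^n) * (Cstar*(2*δ k)^n)) ^ (1-1/p) *
                ((2*δ k)^((n:ℝ)+s*p) * A^p) ^ (1/p))) := by
            have e1 : (μ (closedBall x (δ (k+1)))).toReal⁻¹ ≤ (cstar * (δ k/2/2)^n)⁻¹ := by
              have h5 : cstar * (δ k/2/2)^n = cstar * (δ (k+1)/2)^n := by rw [hδsucc k]
              rw [h5]
              exact inv_anti₀ (by positivity) (hmlow (k+1))
            have e2 : (μ (closedBall x (δ k))).toReal⁻¹ ≤ (cstar * (δ k/2)^n)⁻¹ :=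
              inv_anti₀ (by positivity) (hmlow k)
            refine mul_le_mul e1 (mul_le_mul e2 hDr ENNReal.toReal_nonneg (by positivity))
              (mul_nonneg (inv_nonneg.2 ENNReal.toReal_nonneg) ENNReal.toReal_nonneg)
              (by positivity)
        _ = K1 * ((δ k)^((s*p-(n:ℝ))/p) * A) := hcoll1 (δ k) A (hδpos k) hA0
    have hδpow : ∀ k : ℕ, (δ k)^((s*p-(n:ℝ))/p) = (d/2)^((s*p-(n:ℝ))/p) * β^k := by
      intro k
      have h1 : δ k = (d/2) * (2⁻¹:ℝ)^k := by
        simp only [hδdef]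
        rw [pow_succ, inv_pow, div_eq_mul_inv, mul_inv, mul_comm ((2:ℝ)^k)⁻¹,
          ← mul_assoc, ← div_eq_mul_inv, div_eq_mul_inv d 2, ← div_eq_mul_inv,
          div_eq_mul_inv (d/2)]
      rw [h1, Real.mul_rpow (by positivity) (by positivity), hβdef]
      congr 1
      rw [← Real.rpow_natCast (2⁻¹:ℝ) k, ← Real.rpow_mul (by norm_num), mul_comm,
        Real.rpow_mul (by norm_num), Real.rpow_natCast]
    have htel : ∀ N : ℕ, |a N - a 0| ≤ K1 * (1-β)⁻¹ * ((d/2)^((s*p-(n:ℝ))/p) * A) := by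
      intro N
      calc |a N - a 0| = dist (a N) (a 0) := (Real.dist_eq _ _).symm
        _ = dist (a 0) (a N) := dist_comm _ _
        _ ≤ ∑ i ∈ Finset.range N, dist (a i) (a (i+1)) := dist_le_range_sum_dist a N
        _ ≤ ∑ i ∈ Finset.range N, K1 * ((d/2)^((s*p-(n:ℝ))/p) * A) * β^i := by
            apply Finset.sum_le_sum
            intro i _
            rw [Real.dist_eq, abs_sub_comm]
            calc |a (i+1) - a i| ≤ K1 * ((δ i)^((s*p-(n:ℝ))/p) * A) := hstep i
              _ = K1 * ((d/2)^((s*p-(n:ℝ))/p) * A) * β^i := by rw [hδpow i]; ring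
        _ = K1 * ((d/2)^((s*p-(n:ℝ))/p) * A) * ∑ i ∈ Finset.range N, β^i := by
            rw [← Finset.mul_sum]
        _ ≤ K1 * (1-β)⁻¹ * ((d/2)^((s*p-(n:ℝ))/p) * A) := by
            have h6 := hgeo N
            have hnn : 0 ≤ K1 * ((d/2)^((s*p-(n:ℝ))/p) * A) := by positivity
            calc K1 * ((d/2)^((s*p-(n:ℝ))/p) * A) * ∑ i ∈ Finset.range N, β^i
                ≤ K1 * ((d/2)^((s*p-(n:ℝ))/p) * A) * (1-β)⁻¹ :=
                  mul_le_mul_of_nonneg_left h6 hnn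
              _ = K1 * (1-β)⁻¹ * ((d/2)^((s*p-(n:ℝ))/p) * A) := by ring
    have hv0 : |v x - a 0| ≤ K1 * (1-β)⁻¹ * ((d/2)^((s*p-(n:ℝ))/p) * A) := by
      have hcont : Tendsto (fun N => |a N - a 0|) atTop (nhds (|v x - a 0|)) :=
        (halim.sub_const (a 0)).abs
      exact le_of_tendsto hcont (Eventually.of_forall htel)
    have hNv0 : 0 ≤ Nv := ENNReal.toReal_nonneg
    have ha0 : |a 0| ≤ K2 * d^(-(n:ℝ)/p) * Nv := by
      have h1 := avg_le μ v measurableSet_closedBall (hm0 0) hvsm hvint.integrableOn p hp hNfin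
      rw [← ha_eq 0] at h1
      have h2 : ((μ (closedBall x (δ 0))) ^ (1-1/p)).toReal ≤ (Cstar * d^n)^(1-1/p) := by
        rw [← ENNReal.toReal_rpow]
        apply Real.rpow_le_rpow ENNReal.toReal_nonneg ?_ hexp
        have h3 := hmup 0
        have h4 : 2 * δ 0 = d := by simp only [hδdef]; ring
        rw [h4] at h3
        exact h3
      have h5 : (μ (closedBall x (δ 0))).toReal⁻¹ ≤ (cstar * (d/2/2)^n)⁻¹ := by
        apply inv_anti₀ (by positivity)
        have h6 := hmlow 0
        have h7 : δ 0 / 2 = d/2/2 := by simp only [hδdef]; ring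
        rw [h7] at h6
        exact h6
      calc |a 0| ≤ (μ (closedBall x (δ 0))).toReal⁻¹ *
            (((μ (closedBall x (δ 0))) ^ (1-1/p)).toReal * Nv) := h1
        _ ≤ (cstar * (d/2/2)^n)⁻¹ * ((Cstar * d^n)^(1-1/p) * Nv) :=
            mul_le_mul h5 (mul_le_mul_of_nonneg_right h2 hNv0)
              (mul_nonneg ENNReal.toReal_nonneg hNv0) (by positivity)
        _ = (cstar * (d/2/2)^n)⁻¹ * (Cstar * d^n)^(1-1/p) * Nv := by ring
        _ = K2 * d^(-(n:ℝ)/p) * Nv := by rw [hcoll2 d hd0]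
    have hRea : (d/2)^((s*p-(n:ℝ))/p) ≤ R^((s*p-(n:ℝ))/p) :=
      Real.rpow_le_rpow (by positivity) (by linarith) hea.le
    have hdnp : d^(-(n:ℝ)/p) ≤ d^(-s) * R^((s*p-(n:ℝ))/p) := by
      have h1 : d^(-(n:ℝ)/p) = d^(-s) * d^((s*p-(n:ℝ))/p) := by
        rw [← Real.rpow_add hd0]
        congr 1
        field_simp
        ring
      rw [h1]
      exact mul_le_mul_of_nonneg_left (Real.rpow_le_rpow hd0.le hdR hea.le) (by positivity)
    have hfinal : |v x| ≤ Cb := by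
      have h1 : |v x| ≤ |v x - a 0| + |a 0| := by
        have h0 := abs_add_le (v x - a 0) (a 0)
        rw [sub_add_cancel] at h0
        exact h0
      have h2 : |v x - a 0| ≤ K1 * (1-β)⁻¹ * (R^((s*p-(n:ℝ))/p) * A) := by
        refine le_trans hv0 (mul_le_mul_of_nonneg_left
          (mul_le_mul_of_nonneg_right hRea hA0) ?_)
        exact (mul_pos hK1 hKgeo).le
      have h3 : |a 0| ≤ K2 * (R^((s*p-(n:ℝ))/p) * (d^(-s) * Nv)) := by
        refine le_trans ha0 ?_
        calc K2 * d^(-(n:ℝ)/p) * Nv ≤ K2 * (d^(-s) * R^((s*p-(n:ℝ))/p)) * Nv :=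
              mul_le_mul_of_nonneg_right (mul_le_mul_of_nonneg_left hdnp hK2.le) hNv0
          _ = K2 * (R^((s*p-(n:ℝ))/p) * (d^(-s) * Nv)) := by ring
      rw [hCbdef, hCCdef]
      have hRea0 : (0:ℝ) ≤ R^((s*p-(n:ℝ))/p) := Real.rpow_nonneg hR.le _
      have hds0 : (0:ℝ) ≤ d^(-s) := Real.rpow_nonneg hd0.le _
      nlinarith [h1, h2, h3,
        mul_nonneg (mul_nonneg (mul_pos hK1 hKgeo).le hRea0) (mul_nonneg hds0 hNv0),
        mul_nonneg (mul_nonneg hK2.le hRea0) hA0]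
    rw [Real.norm_eq_abs]
    exact hfinal
  rw [eLpNorm_exponent_top]
  have h7 : fracSeminorm n s p U v = ENNReal.ofReal A := (ENNReal.ofReal_toReal hfrac).symm
  have h8 : eLpNorm v (ENNReal.ofReal p) μ = ENNReal.ofReal Nv :=
    (ENNReal.ofReal_toReal hNfin).symm
  calc eLpNormEssSup v ν ≤ ENNReal.ofReal Cb := eLpNormEssSup_le_of_ae_bound main
    _ ≤ ENNReal.ofReal (CC * R ^ ((s*p-(n:ℝ))/p)) *
        (ENNReal.ofReal A + ENNReal.ofReal (d^(-s)) * ENNReal.ofReal Nv) := by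
        rw [hCbdef, ENNReal.ofReal_mul
          (show (0:ℝ) ≤ CC * R ^ ((s*p-(n:ℝ))/p) by positivity)]
        refine mul_le_mul_right ?_ _
        calc ENNReal.ofReal (A + d^(-s)*Nv)
            ≤ ENNReal.ofReal A + ENNReal.ofReal (d^(-s)*Nv) := ENNReal.ofReal_add_le
          _ = ENNReal.ofReal A + ENNReal.ofReal (d^(-s)) * ENNReal.ofReal Nv := by
              rw [ENNReal.ofReal_mul (Real.rpow_nonneg hd0.le _)]
    _ = ENNReal.ofReal (CC * R ^ ((s * p - (n:ℝ)) / p)) *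
        (fracSeminorm n s p U v +
          ENNReal.ofReal ((R - r) ^ (-s)) *
            eLpNorm v (ENNReal.ofReal p) μ) := by rw [h7, h8, hddef]
end
end

section
/- Let q ∈ (0, 1). Then, for every a, b > 0 and every σ, τ ≥ 0, it holds that (a − b)(σ²/a^q − τ²/b^q) ≤ −(q/2)(a^{(1−q)/2} − b^{(1−q)/2})² · min{σ, τ}² + (4/q) · max{a, b}^{1−q} · (σ − τ)². -/
open Set

private lemma amgm_aux (u v w : ℝ) (hu : 0 ≤ u) (hv : 0 ≤ v) (hw : 0 ≤ w)
    (h : w ^ 2 ≤ u * v) : 2 * w ≤ u + v := by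
  nlinarith [sq_nonneg (u - v), sq_nonneg (u + v)]

set_option maxHeartbeats 1000000 in
private lemma key_lemma (q a b σ τ : ℝ) (hq0 : 0 < q) (hq1 : q < 1)
    (hb : 0 < b) (hab : b ≤ a) (hσ : 0 ≤ σ) (hτ : 0 ≤ τ) :
    (a - b) * (σ ^ 2 / a ^ q - τ ^ 2 / b ^ q)
      ≤ -(q / 2) * (a ^ ((1 - q) / 2) - b ^ ((1 - q) / 2)) ^ 2 * min σ τ ^ 2 +
        4 / q * a ^ (1 - q) * (σ - τ) ^ 2 := by
  have ha : 0 < a := lt_of_lt_of_le hb hab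
  set A := a ^ q with hAdef
  set B := b ^ q with hBdef
  set X := a ^ ((1 - q) / 2) with hXdef
  set Y := b ^ ((1 - q) / 2) with hYdef
  have hA : 0 < A := Real.rpow_pos_of_pos ha q
  have hB : 0 < B := Real.rpow_pos_of_pos hb q
  have hX : 0 < X := Real.rpow_pos_of_pos ha _
  have hY : 0 < Y := Real.rpow_pos_of_pos hb _
  have hΔ : 0 ≤ a - b := sub_nonneg.2 hab
  have hAB : B ≤ A := Real.rpow_le_rpow hb.le hab hq0.le
  have hXY : Y ≤ X := Real.rpow_le_rpow hb.le hab (by linarith)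
  have ha_eq : a = A * X ^ 2 := by
    rw [hAdef, hXdef, sq, ← Real.rpow_add ha, ← Real.rpow_add ha]
    norm_num
  have hb_eq : b = B * Y ^ 2 := by
    rw [hBdef, hYdef, sq, ← Real.rpow_add hb, ← Real.rpow_add hb]
    norm_num
  -- Bernoulli-type inequality: q(a-b)A ≤ a(A-B)
  have bern : (b / a) ^ q * 1 ^ (1 - q) ≤ q * (b / a) + (1 - q) * 1 :=
    Real.geom_mean_le_arith_mean2_weighted hq0.le (by linarith)
      (div_nonneg hb.le ha.le) zero_le_one (by ring)
  have hdiv : (b / a) ^ q = B / A := Real.div_rpow hb.le ha.le q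
  have f1' : q * (a - b) * A ≤ a * (A - B) := by
    rw [hdiv, Real.one_rpow] at bern
    have h2 : (B / A) * (a * A) ≤ (q * (b / a) + (1 - q)) * (a * A) := by
      nlinarith [mul_pos ha hA]
    rw [div_mul_eq_mul_div, mul_comm a A, mul_div_assoc] at h2
    rw [mul_div_cancel_left₀ _ hA.ne'] at h2
    have h3 : q * (b / a) * (a * A) = q * b * A := by field_simp
    nlinarith [h2]
  have f1 : q * (a - b) * B ≤ (A * X ^ 2) * (A - B) := by
    rw [← ha_eq]
    nlinarith [mul_le_mul_of_nonneg_left hAB (mul_nonneg hq0.le hΔ)]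
  -- (X - Y) * (A * X) ≤ a - b
  have hba2 : B * Y ≤ A * X := by
    have h1 : b ^ ((1 + q) / 2) ≤ a ^ ((1 + q) / 2) :=
      Real.rpow_le_rpow hb.le hab (by linarith)
    have e1 : a ^ ((1 + q) / 2) = A * X := by
      rw [hAdef, hXdef, ← Real.rpow_add ha]; ring_nf
    have e2 : b ^ ((1 + q) / 2) = B * Y := by
      rw [hBdef, hYdef, ← Real.rpow_add hb]; ring_nf
    rwa [e1, e2] at h1
  have f2 : (X - Y) * (A * X) ≤ a - b := by
    have h1 : Y * (B * Y) ≤ Y * (A * X) := mul_le_mul_of_nonneg_left hba2 hY.le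
    nlinarith [ha_eq, hb_eq]
  -- key negative term: q (X-Y)^2 A B ≤ (a-b)(A-B)
  have hM2 : q * (X - Y) ^ 2 * (A * B) ≤ (a - b) * (A - B) := by
    have hXYn : 0 ≤ X - Y := sub_nonneg.2 hXY
    have e2 : ((X - Y) * (A * X)) ^ 2 ≤ (a - b) ^ 2 :=
      pow_le_pow_left₀ (mul_nonneg hXYn (mul_nonneg hA.le hX.le)) f2 2
    have e3 : q * B * ((X - Y) * (A * X)) ^ 2 ≤ q * B * (a - b) ^ 2 :=
      mul_le_mul_of_nonneg_left e2 (by positivity)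
    have e4 : (q * (a - b) * B) * (a - b) ≤ ((A * X ^ 2) * (A - B)) * (a - b) :=
      mul_le_mul_of_nonneg_right f1 hΔ
    rw [← mul_le_mul_iff_of_pos_right (show (0 : ℝ) < A * X ^ 2 by positivity)]
    calc q * (X - Y) ^ 2 * (A * B) * (A * X ^ 2)
        = q * B * ((X - Y) * (A * X)) ^ 2 := by ring
      _ ≤ q * B * (a - b) ^ 2 := e3
      _ = (q * (a - b) * B) * (a - b) := by ring
      _ ≤ ((A * X ^ 2) * (A - B)) * (a - b) := e4
      _ = (a - b) * (A - B) * (A * X ^ 2) := by ring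
  have hq' : (0 : ℝ) < q * (A * B) := by positivity
  rw [← mul_le_mul_iff_of_pos_left hq']
  have lhs_eq : q * (A * B) * ((a - b) * (σ ^ 2 / A - τ ^ 2 / B))
      = q * ((a - b) * (σ ^ 2 * B - τ ^ 2 * A)) := by
    field_simp
  have rhs_eq : q * (A * B) *
        (-(q / 2) * (X - Y) ^ 2 * min σ τ ^ 2 + 4 / q * a ^ (1 - q) * (σ - τ) ^ 2)
      = (-(q ^ 2 / 2) * (X - Y) ^ 2 * min σ τ ^ 2 + 4 * X ^ 2 * (σ - τ) ^ 2) * (A * B) := by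
    have hX2 : a ^ (1 - q) = X ^ 2 := by
      rw [hXdef, sq, ← Real.rpow_add ha]; norm_num
    rw [hX2]; field_simp
  rw [lhs_eq, rhs_eq]
  rcases le_total τ σ with hτσ | hτσ
  · -- min = τ, s = σ - τ ≥ 0
    rw [min_eq_right hτσ]
    have hs : 0 ≤ σ - τ := sub_nonneg.2 hτσ
    have haAX : a - b ≤ A * X ^ 2 := by rw [← ha_eq]; linarith
    have C1 : q * (a - b) * B * (σ - τ) ^ 2 ≤ q * (A * X ^ 2) * B * (σ - τ) ^ 2 :=
      mul_le_mul_of_nonneg_right (mul_le_mul_of_nonneg_right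
        (mul_le_mul_of_nonneg_left haAX hq0.le) hB.le) (sq_nonneg _)
    have hc : 0 ≤ q * (a - b) * B * τ ^ 2 * (σ - τ) ^ 2 :=
      mul_nonneg (mul_nonneg (mul_nonneg (mul_nonneg hq0.le hΔ) hB.le) (sq_nonneg τ))
        (sq_nonneg _)
    have C2 : 2 * (q * (a - b) * B * τ * (σ - τ))
        ≤ q / 2 * τ ^ 2 * ((a - b) * (A - B)) + 2 * (X ^ 2 * (σ - τ) ^ 2 * (A * B)) := by
      apply amgm_aux
      · exact mul_nonneg (by positivity) (mul_nonneg hΔ (sub_nonneg.2 hAB))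
      · positivity
      · exact mul_nonneg (mul_nonneg (mul_nonneg (mul_nonneg hq0.le hΔ) hB.le) hτ) hs
      · calc (q * (a - b) * B * τ * (σ - τ)) ^ 2
            = (q * (a - b) * B * τ ^ 2 * (σ - τ) ^ 2) * (q * (a - b) * B) := by ring
          _ ≤ (q * (a - b) * B * τ ^ 2 * (σ - τ) ^ 2) * ((A * X ^ 2) * (A - B)) :=
              mul_le_mul_of_nonneg_left f1 hc
          _ = q / 2 * τ ^ 2 * ((a - b) * (A - B)) * (2 * (X ^ 2 * (σ - τ) ^ 2 * (A * B))) := by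
              ring
    have hM2' : q / 2 * τ ^ 2 * (q * (X - Y) ^ 2 * (A * B))
        ≤ q / 2 * τ ^ 2 * ((a - b) * (A - B)) :=
      mul_le_mul_of_nonneg_left hM2 (by positivity)
    have h4 : 0 ≤ X ^ 2 * (σ - τ) ^ 2 * (A * B) := by positivity
    have h5 := mul_nonneg (show (0:ℝ) ≤ 2 - q by linarith) h4
    calc q * ((a - b) * (σ ^ 2 * B - τ ^ 2 * A))
        = q * (a - b) * B * (σ - τ) ^ 2 + 2 * (q * (a - b) * B * τ * (σ - τ))
            - q / 2 * τ ^ 2 * ((a - b) * (A - B)) - q / 2 * τ ^ 2 * ((a - b) * (A - B)) := by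
          ring
      _ ≤ q * (A * X ^ 2) * B * (σ - τ) ^ 2
            + (q / 2 * τ ^ 2 * ((a - b) * (A - B)) + 2 * (X ^ 2 * (σ - τ) ^ 2 * (A * B)))
            - q / 2 * τ ^ 2 * ((a - b) * (A - B)) - q / 2 * τ ^ 2 * ((a - b) * (A - B)) := by
          linarith [C1, C2]
      _ = (q + 2) * (X ^ 2 * (σ - τ) ^ 2 * (A * B))
            - q / 2 * τ ^ 2 * ((a - b) * (A - B)) := by ring
      _ ≤ (q + 2) * (X ^ 2 * (σ - τ) ^ 2 * (A * B))
            - q / 2 * τ ^ 2 * (q * (X - Y) ^ 2 * (A * B)) := by linarith [hM2']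
      _ ≤ 4 * (X ^ 2 * (σ - τ) ^ 2 * (A * B))
            - q / 2 * τ ^ 2 * (q * (X - Y) ^ 2 * (A * B)) := by linarith [h5]
      _ = (-(q ^ 2 / 2) * (X - Y) ^ 2 * τ ^ 2 + 4 * X ^ 2 * (σ - τ) ^ 2) * (A * B) := by
          ring
  · -- min = σ, σ ≤ τ
    rw [min_eq_left hτσ]
    have hM2' : q * σ ^ 2 * (q * (X - Y) ^ 2 * (A * B)) ≤ q * σ ^ 2 * ((a - b) * (A - B)) :=
      mul_le_mul_of_nonneg_left hM2 (by positivity)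
    have h1 : 0 ≤ (a - b) * ((τ ^ 2 - σ ^ 2) * B) := by
      apply mul_nonneg hΔ
      apply mul_nonneg _ hB.le
      nlinarith
    have h2 : 0 ≤ (a - b) * ((τ ^ 2 - σ ^ 2) * (A - B)) := by
      apply mul_nonneg hΔ
      apply mul_nonneg _ (sub_nonneg.2 hAB)
      nlinarith
    have h4 : 0 ≤ X ^ 2 * (σ - τ) ^ 2 * (A * B) := by positivity
    have h5 : 0 ≤ q ^ 2 / 2 * σ ^ 2 * ((X - Y) ^ 2 * (A * B)) := by positivity
    have h1' := mul_nonneg hq0.le h1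
    have h2' := mul_nonneg hq0.le h2
    calc q * ((a - b) * (σ ^ 2 * B - τ ^ 2 * A))
        = -(q * ((a - b) * ((τ ^ 2 - σ ^ 2) * B)))
            - q * ((a - b) * ((τ ^ 2 - σ ^ 2) * (A - B)))
            - q * σ ^ 2 * ((a - b) * (A - B)) := by ring
      _ ≤ -(q * σ ^ 2 * ((a - b) * (A - B))) := by linarith [h1', h2']
      _ ≤ -(q * σ ^ 2 * (q * (X - Y) ^ 2 * (A * B))) := by linarith [hM2']
      _ ≤ (-(q ^ 2 / 2) * (X - Y) ^ 2 * σ ^ 2 + 4 * X ^ 2 * (σ - τ) ^ 2) * (A * B) := by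
          nlinarith [h4, h5]

/-- Numerical inequality used in the Moser iteration (Lemma A.3). -/
theorem numerical_inequality (q : ℝ) (hq : q ∈ Ioo (0 : ℝ) 1) (a b σ τ : ℝ)
    (ha : 0 < a) (hb : 0 < b) (hσ : 0 ≤ σ) (hτ : 0 ≤ τ) :
    (a - b) * (σ ^ 2 / a ^ q - τ ^ 2 / b ^ q)
      ≤ -(q / 2) * (a ^ ((1 - q) / 2) - b ^ ((1 - q) / 2)) ^ 2 * min σ τ ^ 2 +
        4 / q * max a b ^ (1 - q) * (σ - τ) ^ 2 := by
  rcases le_total b a with hab | hab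
  · rw [max_eq_left hab]
    exact key_lemma q a b σ τ hq.1 hq.2 hb hab hσ hτ
  · have h := key_lemma q b a τ σ hq.1 hq.2 ha hab hτ hσ
    rw [max_eq_right hab, min_comm σ τ]
    have e1 : (a - b) * (σ ^ 2 / a ^ q - τ ^ 2 / b ^ q)
        = (b - a) * (τ ^ 2 / b ^ q - σ ^ 2 / a ^ q) := by ring
    have e2 : (a ^ ((1 - q) / 2) - b ^ ((1 - q) / 2)) ^ 2
        = (b ^ ((1 - q) / 2) - a ^ ((1 - q) / 2)) ^ 2 := by ring
    have e3 : (σ - τ) ^ 2 = (τ - σ) ^ 2 := by ring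
    rw [e1, e2, e3]
    exact h
end
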